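/- arXiv:0711.2346 — 3 statements merged into one kernel-verified Lean document; each statement's English description precedes it below -/
import Mathlib

section
/- With the inclusion-exclusion relation C*(n, h) = ∑_{j=0}^{h} (-1)^j C(n - 2j, j) C(n - 3j, h - j) between two integer-valued arrays C* and C (where C(n,h) = 0 unless 0 ≤ h ≤ n/2), the bivariate formal power series satisfy ∑_{n ≥ 0} ∑_{h ≤ n/2} C*(n, h) w^h x^n = (1/(1 + w x³)) · ∑_{n ≥ 0} ∑_{h ≤ n/2} C(n, h) w^h (x/(1 + w x³))^n, as formal power series in w and x. -/
lemma aux_one_add_pow {A : Type*} [CommRing A] (v : A) (s : ℕ) :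
    ∃ r : A, (1 + v) ^ s = 1 + v * r := by
  induction s with
  | zero => exact ⟨0, by ring⟩
  | succ s ih => obtain ⟨r, hr⟩ := ih; exact ⟨1 + r + v * r, by rw [pow_succ, hr]; ring⟩

lemma aux_key {A : Type*} [CommRing A] (v : A) :
    ∀ m K : ℕ, ∃ r : A,
      (1 + v) ^ (m + 1) *
        (∑ j ∈ Finset.range (K + 1), (-1 : A) ^ j * ((m + j).choose j : A) * v ^ j)
      = 1 + v ^ (K + 1) * r := by
  intro m
  induction m with
  | zero =>
    intro K
    refine ⟨-(-1 : A) ^ (K + 1), ?_⟩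
    have h := geom_sum_mul (-v) (K + 1)
    have hs : (∑ j ∈ Finset.range (K + 1), (-1 : A) ^ j * ((0 + j).choose j : A) * v ^ j)
        = ∑ j ∈ Finset.range (K + 1), (-v) ^ j := by
      refine Finset.sum_congr rfl fun j _ => ?_
      rw [Nat.zero_add, Nat.choose_self]
      push_cast; ring
    rw [hs]
    linear_combination -h
  | succ m ih =>
    intro K
    induction K with
    | zero =>
      obtain ⟨r, hr⟩ := aux_one_add_pow v (m + 2)
      refine ⟨r, ?_⟩
      rw [show (0:ℕ) + 1 = 1 from rfl, Finset.sum_range_one]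
      simpa using hr
    | succ K ihK =>
      obtain ⟨r1, h1⟩ := ih (K + 1)
      obtain ⟨r2, h2⟩ := ihK
      refine ⟨(1 + v) * r1 - r2, ?_⟩
      have hsum : (∑ j ∈ Finset.range (K + 2), (-1 : A) ^ j * ((m + 1 + j).choose j : A) * v ^ j)
          = (∑ j ∈ Finset.range (K + 2), (-1 : A) ^ j * ((m + j).choose j : A) * v ^ j)
            - v * (∑ j ∈ Finset.range (K + 1), (-1 : A) ^ j * ((m + 1 + j).choose j : A) * v ^ j) := by
        rw [Finset.sum_range_succ' (fun j => (-1 : A) ^ j * ((m + 1 + j).choose j : A) * v ^ j) (K + 1),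
          Finset.sum_range_succ' (fun j => (-1 : A) ^ j * ((m + j).choose j : A) * v ^ j) (K + 1),
          Finset.mul_sum]
        have hterm : ∀ j, (-1 : A) ^ (j + 1) * ((m + 1 + (j + 1)).choose (j + 1) : A) * v ^ (j + 1)
            = (-1 : A) ^ (j + 1) * ((m + (j + 1)).choose (j + 1) : A) * v ^ (j + 1)
              - v * ((-1 : A) ^ j * ((m + 1 + j).choose j : A) * v ^ j) := by
          intro j
          have hn : (m + 1 + (j + 1)).choose (j + 1)
              = (m + (j + 1)).choose (j + 1) + (m + 1 + j).choose j := by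
            have h := Nat.choose_succ_succ (m + j + 1) j
            have e1 : m + 1 + (j + 1) = m + j + 1 + 1 := by omega
            have e2 : m + (j + 1) = m + j + 1 := by omega
            have e3 : m + 1 + j = m + j + 1 := by omega
            rw [e1, e2, e3, h]; exact Nat.add_comm _ _
          rw [hn]; push_cast; ring
        rw [Finset.sum_congr rfl fun j _ => hterm j, Finset.sum_sub_distrib]
        simp only [Nat.add_zero, Nat.choose_zero_right]
        push_cast; ring
      rw [hsum]
      linear_combination (1 + v) * h1 - v * h2

open MvPowerSeries

noncomputable def eeF (n h : ℕ) : Fin 2 →₀ ℕ :=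
  Finsupp.single 0 n + Finsupp.single 1 h

lemma eeF_apply0 (n h : ℕ) : eeF n h 0 = n := by
  simp [eeF, Finsupp.single_apply]

lemma eeF_apply1 (n h : ℕ) : eeF n h 1 = h := by
  simp [eeF, Finsupp.single_apply]

lemma eeF_eq_iff (n h : ℕ) (d : Fin 2 →₀ ℕ) : eeF n h = d ↔ n = d 0 ∧ h = d 1 := by
  constructor
  · rintro rfl; exact ⟨(eeF_apply0 n h).symm, (eeF_apply1 n h).symm⟩
  · rintro ⟨h0, h1⟩
    ext a
    fin_cases a
    · simpa [eeF_apply0] using h0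
    · simpa [eeF_apply1] using h1

lemma eeF_le_iff (n h : ℕ) (d : Fin 2 →₀ ℕ) : eeF n h ≤ d ↔ n ≤ d 0 ∧ h ≤ d 1 := by
  rw [Finsupp.le_def]
  constructor
  · intro hle
    exact ⟨by simpa [eeF_apply0] using hle 0, by simpa [eeF_apply1] using hle 1⟩
  · rintro ⟨h0, h1⟩ a
    fin_cases a
    · simpa [eeF_apply0] using h0
    · simpa [eeF_apply1] using h1

lemma eeF_sub (n h : ℕ) (d : Fin 2 →₀ ℕ) : d - eeF n h = eeF (d 0 - n) (d 1 - h) := by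
  ext a
  fin_cases a
  · simp [Finsupp.tsub_apply, eeF_apply0]
  · simp [Finsupp.tsub_apply, eeF_apply1]

lemma mono_eq (c : ℚ) (n h : ℕ) :
    MvPowerSeries.C (σ := Fin 2) (R := ℚ) c * (X 1 : MvPowerSeries (Fin 2) ℚ) ^ h * (X 0) ^ n
      = monomial (R := ℚ) (eeF n h) c := by
  rw [X_pow_eq, X_pow_eq, ← monomial_zero_eq_C_apply, monomial_mul_monomial,
    monomial_mul_monomial]
  rw [mul_one, mul_one, eeF]
  congr 1
  rw [zero_add, add_comm]

lemma vpow (j : ℕ) :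
    ((X 1 : MvPowerSeries (Fin 2) ℚ) * X 0 ^ 3) ^ j = monomial (R := ℚ) (eeF (3 * j) j) 1 := by
  have : ((X 1 : MvPowerSeries (Fin 2) ℚ) * X 0 ^ 3) ^ j = X 1 ^ j * X 0 ^ (3 * j) := by
    rw [mul_pow, ← pow_mul]
  rw [this, X_pow_eq, X_pow_eq, monomial_mul_monomial, mul_one, eeF, add_comm]

lemma coeff_cv (c : ℕ) (j : ℕ) :
    ((-1 : MvPowerSeries (Fin 2) ℚ) ^ j * (c : MvPowerSeries (Fin 2) ℚ))
        * ((X 1 : MvPowerSeries (Fin 2) ℚ) * X 0 ^ 3) ^ j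
      = monomial (R := ℚ) (eeF (3 * j) j) ((-1 : ℚ) ^ j * c) := by
  have h1 : ((-1 : MvPowerSeries (Fin 2) ℚ) ^ j * (c : MvPowerSeries (Fin 2) ℚ))
      = MvPowerSeries.C (σ := Fin 2) (R := ℚ) ((-1 : ℚ) ^ j * c) := by
    rw [map_mul, map_pow, map_neg, map_one, map_natCast]
  rw [h1, vpow, ← monomial_zero_eq_C_apply, monomial_mul_monomial, zero_add, mul_one]

lemma uu_mul_inv :
    ((1 + X 1 * X 0 ^ 3 : MvPowerSeries (Fin 2) ℚ))
      * (1 + X 1 * X 0 ^ 3 : MvPowerSeries (Fin 2) ℚ)⁻¹ = 1 := by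
  apply MvPowerSeries.mul_inv_cancel
  simp [constantCoeff_X]

lemma coeff_inv_pow (m a b : ℕ) :
    MvPowerSeries.coeff (R := ℚ) (eeF a b) ((1 + X 1 * X 0 ^ 3 : MvPowerSeries (Fin 2) ℚ)⁻¹ ^ (m + 1))
      = if a = 3 * b then (-1 : ℚ) ^ b * ((m + b).choose b : ℚ) else 0 := by
  classical
  obtain ⟨r, hk⟩ := aux_key ((X 1 : MvPowerSeries (Fin 2) ℚ) * X 0 ^ 3) m a
  set u : MvPowerSeries (Fin 2) ℚ := 1 + X 1 * X 0 ^ 3 with hudef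
  set v : MvPowerSeries (Fin 2) ℚ := X 1 * X 0 ^ 3 with hvdef
  have h1 : u ^ (m + 1) * (u⁻¹) ^ (m + 1) = 1 := by
    rw [← mul_pow, uu_mul_inv, one_pow]
  have hinv : (u⁻¹) ^ (m + 1)
      = (∑ j ∈ Finset.range (a + 1),
          (-1 : MvPowerSeries (Fin 2) ℚ) ^ j * ((m + j).choose j : MvPowerSeries (Fin 2) ℚ) * v ^ j)
        - v ^ (a + 1) * (r * (u⁻¹) ^ (m + 1)) := by
    linear_combination (-((u⁻¹) ^ (m + 1))) * hk
      + (∑ j ∈ Finset.range (a + 1),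
          (-1 : MvPowerSeries (Fin 2) ℚ) ^ j * ((m + j).choose j : MvPowerSeries (Fin 2) ℚ) * v ^ j) * h1
  rw [hinv, map_sub]
  have hz : MvPowerSeries.coeff (R := ℚ) (eeF a b) (v ^ (a + 1) * (r * (u⁻¹) ^ (m + 1))) = 0 := by
    rw [hvdef, vpow, coeff_monomial_mul, if_neg]
    intro hle
    have := (eeF_le_iff _ _ _).mp hle
    rw [eeF_apply0, eeF_apply1] at this
    omega
  rw [hz, sub_zero, map_sum]
  have hterm : ∀ j, MvPowerSeries.coeff (R := ℚ) (eeF a b)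
      ((-1 : MvPowerSeries (Fin 2) ℚ) ^ j * ((m + j).choose j : MvPowerSeries (Fin 2) ℚ) * v ^ j)
      = if 3 * j = a ∧ j = b then (-1 : ℚ) ^ j * ((m + j).choose j : ℚ) else 0 := by
    intro j
    rw [hvdef, coeff_cv, coeff_monomial]
    by_cases h : eeF a b = eeF (3 * j) j
    · have := (eeF_eq_iff _ _ _).mp h.symm
      rw [eeF_apply0, eeF_apply1] at this
      rw [if_pos h, if_pos ⟨this.1, this.2⟩]
    · rw [if_neg h, if_neg]
      intro ⟨h1', h2'⟩
      exact h ((eeF_eq_iff _ _ _).mpr ⟨by rw [h1', eeF_apply0], by rw [h2', eeF_apply1]⟩).symm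
  rw [Finset.sum_congr rfl fun j _ => hterm j]
  by_cases hab : a = 3 * b
  · rw [if_pos hab]
    rw [Finset.sum_eq_single_of_mem b (by simp; omega)]
    · rw [if_pos ⟨hab.symm, rfl⟩]
    · intro j _ hj
      rw [if_neg]; intro ⟨_, h2'⟩; exact hj h2'
  · rw [if_neg hab]
    apply Finset.sum_eq_zero
    intro j _
    rw [if_neg]; intro ⟨h1', h2'⟩; exact hab (by omega)

/-- Transfer of the inclusion–exclusion relation
`C*(n,h) = ∑_{j=0}^h (-1)^j C(n-2j,j) C(n-3j,h-j)` to bivariate formal power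
series in `x = X 0`, `w = X 1`:
`∑_n ∑_{h ≤ n/2} C*(n,h) w^h x^n
   = (1/(1+w x³)) ∑_n ∑_{h ≤ n/2} C(n,h) w^h (x/(1+w x³))^n`.
Stated coefficient-wise; since every summand indexed by `n` has `x`-order `≥ n`,
only terms `n ≤ d 0` contribute to the coefficient at `d`, so the truncated
sums have exactly the coefficients of the full series. -/
theorem stmt8 (Cs Cc : ℕ → ℕ → ℤ)
    (hCc : ∀ n h : ℕ, n / 2 < h → Cc n h = 0)
    (hCs : ∀ n h : ℕ,
      Cs n h = ∑ j ∈ Finset.range (h + 1),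
        (-1 : ℤ) ^ j * ((n - 2 * j).choose j : ℤ) * Cc (n - 3 * j) (h - j)) :
    ∀ d : Fin 2 →₀ ℕ,
      MvPowerSeries.coeff (R := ℚ) d
        (∑ n ∈ Finset.range (d 0 + 1), ∑ h ∈ Finset.range (n / 2 + 1),
          MvPowerSeries.C (σ := Fin 2) (R := ℚ) ((Cs n h : ℚ)) *
            (MvPowerSeries.X 1) ^ h * (MvPowerSeries.X 0) ^ n)
      = MvPowerSeries.coeff (R := ℚ) d
        ((1 + MvPowerSeries.X 1 * (MvPowerSeries.X (0 : Fin 2)) ^ 3)⁻¹ *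
          ∑ n ∈ Finset.range (d 0 + 1), ∑ h ∈ Finset.range (n / 2 + 1),
            MvPowerSeries.C (σ := Fin 2) (R := ℚ) ((Cc n h : ℚ)) *
              (MvPowerSeries.X 1) ^ h *
              (MvPowerSeries.X 0 *
                (1 + MvPowerSeries.X 1 * (MvPowerSeries.X (0 : Fin 2)) ^ 3)⁻¹) ^ n) := by
  classical
  intro d
  -- LHS
  have hL : MvPowerSeries.coeff (R := ℚ) d
        (∑ n ∈ Finset.range (d 0 + 1), ∑ h ∈ Finset.range (n / 2 + 1),
          MvPowerSeries.C (σ := Fin 2) (R := ℚ) ((Cs n h : ℚ)) *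
            (MvPowerSeries.X 1) ^ h * (MvPowerSeries.X 0) ^ n)
      = if d 1 ≤ d 0 / 2 then ((Cs (d 0) (d 1) : ℤ) : ℚ) else 0 := by
    simp only [mono_eq, map_sum, coeff_monomial]
    rw [Finset.sum_eq_single_of_mem (d 0) (Finset.self_mem_range_succ _)]
    · by_cases hc : d 1 ≤ d 0 / 2
      · rw [if_pos hc, Finset.sum_eq_single_of_mem (d 1) (Finset.mem_range_succ_iff.mpr hc)]
        · rw [if_pos (((eeF_eq_iff _ _ _).mpr ⟨rfl, rfl⟩).symm)]
        · intro h _ hne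
          rw [if_neg]
          intro he
          exact hne ((eeF_eq_iff _ _ _).mp he.symm).2
      · rw [if_neg hc]
        apply Finset.sum_eq_zero
        intro h hh
        rw [if_neg]
        intro he
        have h2 := ((eeF_eq_iff _ _ _).mp he.symm).2
        have hh' := Finset.mem_range_succ_iff.mp hh
        omega
    · intro n _ hne
      apply Finset.sum_eq_zero
      intro h _
      rw [if_neg]
      intro he
      exact hne ((eeF_eq_iff _ _ _).mp he.symm).1
  -- RHS termwise
  have hterm : ∀ (c : ℚ) (n h : ℕ),
      MvPowerSeries.coeff (R := ℚ) d
        ((1 + MvPowerSeries.X 1 * (MvPowerSeries.X (0 : Fin 2)) ^ 3)⁻¹ *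
          (MvPowerSeries.C (σ := Fin 2) (R := ℚ) c * (MvPowerSeries.X 1) ^ h *
            (MvPowerSeries.X 0 *
              (1 + MvPowerSeries.X 1 * (MvPowerSeries.X (0 : Fin 2)) ^ 3)⁻¹) ^ n))
      = if n ≤ d 0 ∧ h ≤ d 1 then
          c * (if d 0 - n = 3 * (d 1 - h) then
            (-1 : ℚ) ^ (d 1 - h) * ((n + (d 1 - h)).choose (d 1 - h) : ℚ) else 0)
        else 0 := by
    intro c n h
    have e1 : (1 + MvPowerSeries.X 1 * (MvPowerSeries.X (0 : Fin 2)) ^ 3)⁻¹ *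
          (MvPowerSeries.C (σ := Fin 2) (R := ℚ) c * (MvPowerSeries.X 1) ^ h *
            (MvPowerSeries.X 0 *
              (1 + MvPowerSeries.X 1 * (MvPowerSeries.X (0 : Fin 2)) ^ 3)⁻¹) ^ n)
        = MvPowerSeries.monomial (R := ℚ) (eeF n h) c *
            ((1 + MvPowerSeries.X 1 * (MvPowerSeries.X (0 : Fin 2)) ^ 3)⁻¹) ^ (n + 1) := by
      rw [mul_pow, ← mono_eq, pow_succ]
      ring
    rw [e1, coeff_monomial_mul, eeF_sub, coeff_inv_pow]
    exact if_congr (eeF_le_iff n h d) rfl rfl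
  have hR : MvPowerSeries.coeff (R := ℚ) d
        ((1 + MvPowerSeries.X 1 * (MvPowerSeries.X (0 : Fin 2)) ^ 3)⁻¹ *
          ∑ n ∈ Finset.range (d 0 + 1), ∑ h ∈ Finset.range (n / 2 + 1),
            MvPowerSeries.C (σ := Fin 2) (R := ℚ) ((Cc n h : ℚ)) *
              (MvPowerSeries.X 1) ^ h *
              (MvPowerSeries.X 0 *
                (1 + MvPowerSeries.X 1 * (MvPowerSeries.X (0 : Fin 2)) ^ 3)⁻¹) ^ n)
      = ∑ m ∈ Finset.range (d 0 + 1), ∑ h' ∈ Finset.range (m / 2 + 1),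
          (if m ≤ d 0 ∧ h' ≤ d 1 then
            ((Cc m h' : ℤ) : ℚ) * (if d 0 - m = 3 * (d 1 - h') then
              (-1 : ℚ) ^ (d 1 - h') * ((m + (d 1 - h')).choose (d 1 - h') : ℚ) else 0)
          else 0) := by
    rw [Finset.mul_sum, map_sum]
    refine Finset.sum_congr rfl fun n _ => ?_
    rw [Finset.mul_sum, map_sum]
    exact Finset.sum_congr rfl fun h _ => hterm _ n h
  rw [hL, hR]
  by_cases hc : d 1 ≤ d 0 / 2
  · rw [if_pos hc]
    have hcs : ((Cs (d 0) (d 1) : ℤ) : ℚ)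
        = ∑ j ∈ Finset.range (d 1 + 1),
            (-1 : ℚ) ^ j * ((d 0 - 2 * j).choose j : ℚ) * ((Cc (d 0 - 3 * j) (d 1 - j) : ℤ) : ℚ) := by
      rw [hCs]
      push_cast
      rfl
    rw [hcs]
    have st1 : ∀ m ∈ Finset.range (d 0 + 1),
        (∑ h' ∈ Finset.range (m / 2 + 1),
          (if m ≤ d 0 ∧ h' ≤ d 1 then
            ((Cc m h' : ℤ) : ℚ) * (if d 0 - m = 3 * (d 1 - h') then
              (-1 : ℚ) ^ (d 1 - h') * ((m + (d 1 - h')).choose (d 1 - h') : ℚ) else 0)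
          else 0))
        = ∑ h' ∈ Finset.range (d 0 + 1),
          (if m ≤ d 0 ∧ h' ≤ d 1 then
            ((Cc m h' : ℤ) : ℚ) * (if d 0 - m = 3 * (d 1 - h') then
              (-1 : ℚ) ^ (d 1 - h') * ((m + (d 1 - h')).choose (d 1 - h') : ℚ) else 0)
          else 0) := by
      intro m hm
      have hm' := Finset.mem_range_succ_iff.mp hm
      apply Finset.sum_subset
      · intro x hx
        rw [Finset.mem_range] at hx ⊢
        omega
      · intro h' _ h'notin
        rw [Finset.mem_range] at h'notin
        have hgt : m / 2 < h' := by omega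
        rw [hCc m h' hgt]
        simp
    rw [Finset.sum_congr rfl st1, Finset.sum_comm]
    have hd1 : d 1 ≤ d 0 := by omega
    rw [← Finset.sum_subset (Finset.range_subset_range.mpr (by omega : d 1 + 1 ≤ d 0 + 1))
      (by
        intro h' _ h'notin
        rw [Finset.mem_range] at h'notin
        apply Finset.sum_eq_zero
        intro m _
        rw [if_neg]
        intro hcond
        omega)]
    have st3 : ∀ h' ∈ Finset.range (d 1 + 1),
        (∑ m ∈ Finset.range (d 0 + 1),
          (if m ≤ d 0 ∧ h' ≤ d 1 then
            ((Cc m h' : ℤ) : ℚ) * (if d 0 - m = 3 * (d 1 - h') then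
              (-1 : ℚ) ^ (d 1 - h') * ((m + (d 1 - h')).choose (d 1 - h') : ℚ) else 0)
          else 0))
        = (if d 0 - 3 * (d 1 - h') ≤ d 0 ∧ h' ≤ d 1 then
            ((Cc (d 0 - 3 * (d 1 - h')) h' : ℤ) : ℚ) *
              (if d 0 - (d 0 - 3 * (d 1 - h')) = 3 * (d 1 - h') then
              (-1 : ℚ) ^ (d 1 - h') *
                (((d 0 - 3 * (d 1 - h')) + (d 1 - h')).choose (d 1 - h') : ℚ) else 0)
          else 0) := by
      intro h' _
      apply Finset.sum_eq_single_of_mem (d 0 - 3 * (d 1 - h'))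
        (Finset.mem_range_succ_iff.mpr (by omega))
      intro m _ hne
      split_ifs with h1 h2
      · exfalso
        obtain ⟨hm1, _⟩ := h1
        omega
      · exact mul_zero _
      · rfl
    rw [Finset.sum_congr rfl st3]
    have hrefl := Finset.sum_range_reflect
      (fun h' => (if d 0 - 3 * (d 1 - h') ≤ d 0 ∧ h' ≤ d 1 then
            ((Cc (d 0 - 3 * (d 1 - h')) h' : ℤ) : ℚ) *
              (if d 0 - (d 0 - 3 * (d 1 - h')) = 3 * (d 1 - h') then
              (-1 : ℚ) ^ (d 1 - h') *
                (((d 0 - 3 * (d 1 - h')) + (d 1 - h')).choose (d 1 - h') : ℚ) else 0)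
          else 0)) (d 1 + 1)
    simp only [Nat.add_sub_cancel] at hrefl
    rw [← hrefl]
    refine Finset.sum_congr rfl fun j hj => ?_
    have hj' : j ≤ d 1 := Finset.mem_range_succ_iff.mp hj
    have e0 : d 1 - (d 1 - j) = j := by omega
    rw [e0]
    rw [if_pos ⟨by omega, by omega⟩]
    by_cases h3 : 3 * j ≤ d 0
    · rw [if_pos (by omega)]
      have e1 : d 0 - 3 * j + j = d 0 - 2 * j := by omega
      rw [e1]
      ring
    · rw [if_neg (by omega)]
      have hz : (d 0 - 2 * j).choose j = 0 := Nat.choose_eq_zero_of_lt (by omega)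
      rw [hz]
      push_cast
      ring
  · rw [if_neg hc]
    symm
    apply Finset.sum_eq_zero
    intro m hm
    apply Finset.sum_eq_zero
    intro h' hh'
    have hm' := Finset.mem_range_succ_iff.mp hm
    have hh'' := Finset.mem_range_succ_iff.mp hh'
    split_ifs with h1 h2
    · exfalso
      obtain ⟨hm1, hh1⟩ := h1
      omega
    · exact mul_zero _
    · rfl
end

section
/- For every n ≥ 1, the map sending a k-noncrossing RNA structure δ with arc-length ≥ 3 and stack-length ≥ σ (σ ≥ 2) with h arcs on [n] to the pair (c(δ), (a_1,...,a_{h-b})) — where c(δ) collapses each maximal stack ((i-ℓ, j+ℓ),...,(i,j)) to the single arc (i,j) and relabels, b is the total number of removed arcs, and a_t is the number of arcs removed from the t-th stack (left to right) plus (σ-1) — is a bijection onto the disjoint union over b from σ-1 to h-1 of C*_k(n-2b, h-b) × {(a_1,...,a_{h-b}) : ∑ a_t = b, each a_t ≥ σ-1}, where C*_k(m, g) is the set of k-noncrossing core structures on [m] with g arcs, arc-length ≥ 2, containing no arc (i, i+2) with i+1 isolated. -/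
open Finset

/-- A diagram on `[n] = {1,…,n}`: a partial matching given by arcs `(i,j)` with
`1 ≤ i < j ≤ n`, every vertex having degree at most one. -/
def IsDiagram (n : ℕ) (M : Finset (ℕ × ℕ)) : Prop :=
  (∀ p ∈ M, 1 ≤ p.1 ∧ p.1 < p.2 ∧ p.2 ≤ n) ∧
  (∀ p ∈ M, ∀ q ∈ M, p ≠ q → p.1 ≠ q.1 ∧ p.1 ≠ q.2 ∧ p.2 ≠ q.1 ∧ p.2 ≠ q.2)

/-- `M` contains `k` mutually crossing arcs `(i_1,j_1),…,(i_k,j_k)` with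
`i_1 < … < i_k < j_1 < … < j_k`. -/
def MutuallyCrossing (k : ℕ) (M : Finset (ℕ × ℕ)) : Prop :=
  ∃ f : Fin k → ℕ × ℕ, (∀ t, f t ∈ M) ∧
    StrictMono (fun t => (f t).1) ∧ StrictMono (fun t => (f t).2) ∧
    ∀ s t : Fin k, (f s).1 < (f t).2

/-- The set of isolated (degree-0) vertices of the diagram `M` on `[n]`. -/
def IsolatedVerts (n : ℕ) (M : Finset (ℕ × ℕ)) : Finset ℕ :=
  (Finset.Icc 1 n).filter fun v => ∀ p ∈ M, v ≠ p.1 ∧ v ≠ p.2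

/-- The innermost arcs of `δ`: arcs kept by the collapse map (one per stack). -/
def Kept (δ : Finset (ℕ × ℕ)) : Finset (ℕ × ℕ) :=
  δ.filter fun p => (p.1 + 1, p.2 - 1) ∉ δ

/-- The vertices of `[n]` surviving the collapse: all vertices that are not
endpoints of a removed (non-innermost) arc. -/
def KeptVerts (n : ℕ) (δ : Finset (ℕ × ℕ)) : Finset ℕ :=
  (Finset.Icc 1 n).filter fun v => ∀ p ∈ δ, (v = p.1 ∨ v = p.2) → p ∈ Kept δ

/-- Relabelling of the surviving vertices, left to right in increasing order. -/
def rankOf (n : ℕ) (δ : Finset (ℕ × ℕ)) (v : ℕ) : ℕ :=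
  ((KeptVerts n δ).filter (· ≤ v)).card

/-- The collapse map `c`: each maximal stack `((i-ℓ,j+ℓ),…,(i,j))` is collapsed
to its innermost arc `(i,j)`; then the surviving vertices are relabelled. -/
def collapse (n : ℕ) (δ : Finset (ℕ × ℕ)) : Finset (ℕ × ℕ) :=
  (Kept δ).image fun p => (rankOf n δ p.1, rankOf n δ p.2)

/-- The number of arcs removed from the stack of an innermost arc `p = (i,j)`:
the length of the maximal run `(i,j),(i-1,j+1),(i-2,j+2),…` inside `δ`, minus one. -/
def stackMult (n : ℕ) (δ : Finset (ℕ × ℕ)) (p : ℕ × ℕ) : ℕ :=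
  ((Finset.range (n + 1)).filter fun t => ∀ s ≤ t, (p.1 - s, p.2 + s) ∈ δ).card - 1

/-- The multiplicity attached to an arc `a` of the core `c(δ)`: the number of
arcs removed from the stack of `δ` collapsing onto `a` (and `0` if `a` is not
an arc of `c(δ)`). -/
def multFun (n : ℕ) (δ : Finset (ℕ × ℕ)) (a : ℕ × ℕ) : ℕ :=
  ∑ p ∈ (Kept δ).filter (fun p => (rankOf n δ p.1, rankOf n δ p.2) = a),
    stackMult n δ p

/-- `C*_k(m,g)`: `k`-noncrossing core structures on `[m]` with `g` arcs,
arc-length ≥ 2, no two parallel arcs `(i,j),(i+1,j-1)`, and no arc `(i,i+2)`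
with `i+1` isolated. -/
def IsCoreStar (k m g : ℕ) (M : Finset (ℕ × ℕ)) : Prop :=
  IsDiagram m M ∧ ¬ MutuallyCrossing k M ∧ M.card = g ∧
    (∀ p ∈ M, p.1 + 2 ≤ p.2) ∧ (∀ p ∈ M, (p.1 + 1, p.2 - 1) ∉ M) ∧
    (∀ p ∈ M, p.2 = p.1 + 2 → p.1 + 1 ∉ IsolatedVerts m M)

namespace S14

/-- Context for the expansion side. -/
structure Ctx (σ nc b : ℕ) (M : Finset (ℕ × ℕ)) (m : ℕ × ℕ → ℕ) : Prop where
  hM : IsDiagram nc M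
  hσ : 2 ≤ σ
  harc : ∀ p ∈ M, p.1 + 2 ≤ p.2
  hpar : ∀ p ∈ M, (p.1 + 1, p.2 - 1) ∉ M
  hiso : ∀ p ∈ M, p.2 = p.1 + 2 → p.1 + 1 ∉ IsolatedVerts nc M
  hm0 : ∀ a ∉ M, m a = 0
  hmσ : ∀ a ∈ M, σ - 1 ≤ m a
  hsum : ∑ a ∈ M, m a = b


variable {n nc : ℕ} {M : Finset (ℕ × ℕ)} {m : ℕ × ℕ → ℕ}

/-- basic diagram facts -/
lemma eq_of_fst (hM : IsDiagram nc M) {p q : ℕ × ℕ} (hp : p ∈ M) (hq : q ∈ M)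
    (h : p.1 = q.1) : p = q := by
  by_contra hne
  exact (hM.2 p hp q hq hne).1 h

lemma eq_of_snd (hM : IsDiagram nc M) {p q : ℕ × ℕ} (hp : p ∈ M) (hq : q ∈ M)
    (h : p.2 = q.2) : p = q := by
  by_contra hne
  exact (hM.2 p hp q hq hne).2.2.2 h

lemma fst_ne_snd (hM : IsDiagram nc M) {p q : ℕ × ℕ} (hp : p ∈ M) (hq : q ∈ M) :
    p.1 ≠ q.2 := by
  by_cases hpq : p = q
  · subst hpq; exact Nat.ne_of_lt (hM.1 p hp).2.1
  · exact (hM.2 p hp q hq hpq).2.1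

/-- The replacement/shift map. -/
def phi (M : Finset (ℕ × ℕ)) (m : ℕ × ℕ → ℕ) (v : ℕ) : ℕ :=
  v + ∑ p ∈ M, m p * ((if p.1 ≤ v then 1 else 0) + (if p.2 < v then 1 else 0))

def expandF (M : Finset (ℕ × ℕ)) (m : ℕ × ℕ → ℕ) : Finset (ℕ × ℕ) :=
  M.biUnion fun p => (Finset.range (m p + 1)).image fun s => (phi M m p.1 - s, phi M m p.2 + s)

lemma le_phi (v : ℕ) : v ≤ phi M m v := Nat.le_add_right _ _

lemma phi_increment {u v : ℕ} (h : u ≤ v) :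
    phi M m v = phi M m u + (v - u) +
      ∑ p ∈ M, m p * ((if u < p.1 ∧ p.1 ≤ v then 1 else 0) + (if u ≤ p.2 ∧ p.2 < v then 1 else 0)) := by
  unfold phi
  have hc : ∀ p ∈ M, m p * ((if p.1 ≤ v then 1 else 0) + (if p.2 < v then 1 else 0)) =
      m p * ((if p.1 ≤ u then 1 else 0) + (if p.2 < u then 1 else 0)) +
      m p * ((if u < p.1 ∧ p.1 ≤ v then 1 else 0) + (if u ≤ p.2 ∧ p.2 < v then 1 else 0)) := by
    intro p _
    rw [← Nat.mul_add]
    congr 1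
    split_ifs <;> omega
  rw [Finset.sum_congr rfl hc, Finset.sum_add_distrib]
  omega

lemma phi_le_phi {u v : ℕ} (h : u ≤ v) : phi M m u ≤ phi M m v := by
  rw [phi_increment (M := M) (m := m) h]; omega

lemma phi_add_le {u v : ℕ} (h : u ≤ v) : phi M m u + (v - u) ≤ phi M m v := by
  rw [phi_increment (M := M) (m := m) h]; omega

lemma phi_lt_phi {u v : ℕ} (h : u < v) : phi M m u < phi M m v := by
  have := phi_add_le (M := M) (m := m) h.le; omega

lemma phi_le_reflect {u v : ℕ} (h : phi M m u ≤ phi M m v) : u ≤ v := by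
  by_contra hc
  exact absurd (phi_lt_phi (M := M) (m := m) (by omega : v < u)) (by omega)

lemma phi_inj {u v : ℕ} (h : phi M m u = phi M m v) : u = v := by
  have h1 := phi_le_reflect (M := M) (m := m) h.le
  have h2 := phi_le_reflect (M := M) (m := m) h.ge
  omega

lemma phi_gap {u v : ℕ} {p : ℕ × ℕ} (hp : p ∈ M) (huv : u ≤ v)
    (h1 : (u < p.1 ∧ p.1 ≤ v) ∨ (u ≤ p.2 ∧ p.2 < v)) :
    phi M m u + (v - u) + m p ≤ phi M m v := by
  rw [phi_increment (M := M) (m := m) huv]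
  have hsum : m p * ((if u < p.1 ∧ p.1 ≤ v then 1 else 0) + (if u ≤ p.2 ∧ p.2 < v then 1 else 0)) ≤
      ∑ q ∈ M, m q * ((if u < q.1 ∧ q.1 ≤ v then 1 else 0) + (if u ≤ q.2 ∧ q.2 < v then 1 else 0)) := by
    exact Finset.single_le_sum
      (f := fun q : ℕ × ℕ => m q * ((if u < q.1 ∧ q.1 ≤ v then 1 else 0) + (if u ≤ q.2 ∧ q.2 < v then 1 else 0)))
      (fun i _ => Nat.zero_le _) hp
  have h1' : 1 ≤ ((if u < p.1 ∧ p.1 ≤ v then 1 else 0) + (if u ≤ p.2 ∧ p.2 < v then 1 else 0)) := by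
    split_ifs <;> omega
  have hterm : m p ≤ m p * ((if u < p.1 ∧ p.1 ≤ v then 1 else 0) + (if u ≤ p.2 ∧ p.2 < v then 1 else 0)) := by
    calc m p = m p * 1 := by ring
      _ ≤ _ := Nat.mul_le_mul_left _ h1'
  omega

lemma phi_gap_pair {u v : ℕ} {p q : ℕ × ℕ} (hp : p ∈ M) (hq : q ∈ M) (hpq : p ≠ q) (huv : u ≤ v)
    (h1 : (u < p.1 ∧ p.1 ≤ v) ∨ (u ≤ p.2 ∧ p.2 < v))
    (h2 : (u < q.1 ∧ q.1 ≤ v) ∨ (u ≤ q.2 ∧ q.2 < v)) :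
    phi M m u + (v - u) + m p + m q ≤ phi M m v := by
  rw [phi_increment (M := M) (m := m) huv]
  have hsub : ({p, q} : Finset (ℕ × ℕ)) ⊆ M := by
    intro x hx; simp at hx; rcases hx with rfl | rfl <;> assumption
  have hsum : m p * ((if u < p.1 ∧ p.1 ≤ v then 1 else 0) + (if u ≤ p.2 ∧ p.2 < v then 1 else 0)) +
      m q * ((if u < q.1 ∧ q.1 ≤ v then 1 else 0) + (if u ≤ q.2 ∧ q.2 < v then 1 else 0)) ≤
      ∑ r ∈ M, m r * ((if u < r.1 ∧ r.1 ≤ v then 1 else 0) + (if u ≤ r.2 ∧ r.2 < v then 1 else 0)) := by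
    have h0 := Finset.sum_le_sum_of_subset_of_nonneg
      (f := fun r : ℕ × ℕ => m r * ((if u < r.1 ∧ r.1 ≤ v then 1 else 0) + (if u ≤ r.2 ∧ r.2 < v then 1 else 0)))
      hsub (fun i _ _ => Nat.zero_le _)
    rw [Finset.sum_pair hpq] at h0
    exact h0
  have h1' : 1 ≤ ((if u < p.1 ∧ p.1 ≤ v then 1 else 0) + (if u ≤ p.2 ∧ p.2 < v then 1 else 0)) := by
    split_ifs <;> omega
  have h2' : 1 ≤ ((if u < q.1 ∧ q.1 ≤ v then 1 else 0) + (if u ≤ q.2 ∧ q.2 < v then 1 else 0)) := by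
    split_ifs <;> omega
  have ht1 : m p ≤ m p * ((if u < p.1 ∧ p.1 ≤ v then 1 else 0) + (if u ≤ p.2 ∧ p.2 < v then 1 else 0)) := by
    calc m p = m p * 1 := by ring
      _ ≤ _ := Nat.mul_le_mul_left _ h1'
  have ht2 : m q ≤ m q * ((if u < q.1 ∧ q.1 ≤ v then 1 else 0) + (if u ≤ q.2 ∧ q.2 < v then 1 else 0)) := by
    calc m q = m q * 1 := by ring
      _ ≤ _ := Nat.mul_le_mul_left _ h2'
  omega

lemma phi_left_window (hM : IsDiagram nc M) {p : ℕ × ℕ} (hp : p ∈ M) :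
    phi M m (p.1 - 1) + 1 + m p ≤ phi M m p.1 := by
  have hb := hM.1 p hp
  have := phi_gap (m := m) hp (show p.1 - 1 ≤ p.1 by omega) (Or.inl ⟨by omega, le_refl _⟩)
  omega

lemma phi_right_window (hM : IsDiagram nc M) {p : ℕ × ℕ} (hp : p ∈ M) :
    phi M m p.2 + 1 + m p ≤ phi M m (p.2 + 1) := by
  have := phi_gap (m := m) hp (show p.2 ≤ p.2 + 1 by omega) (Or.inr ⟨le_refl _, by omega⟩)
  omega

lemma mp_lt_phi_fst (hM : IsDiagram nc M) {p : ℕ × ℕ} (hp : p ∈ M) :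
    m p + 1 ≤ phi M m p.1 := by
  have := phi_left_window (m := m) hM hp
  omega

lemma decode_LL_aux (hM : IsDiagram nc M) {p q : ℕ × ℕ} {s s' : ℕ} (hp : p ∈ M) (hq : q ∈ M)
    (hs : s ≤ m p) (hs' : s' ≤ m q) (hlt : p.1 < q.1) :
    phi M m p.1 - s ≠ phi M m q.1 - s' := by
  have h1 : phi M m p.1 ≤ phi M m (q.1 - 1) := phi_le_phi (by omega)
  have h2 := phi_left_window (m := m) hM hq
  have h3 := mp_lt_phi_fst (m := m) hM hq
  omega

lemma decode_LL (hM : IsDiagram nc M) {p q : ℕ × ℕ} {s s' : ℕ} (hp : p ∈ M) (hq : q ∈ M)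
    (hs : s ≤ m p) (hs' : s' ≤ m q) (hx : phi M m p.1 - s = phi M m q.1 - s') :
    p.1 = q.1 ∧ s = s' := by
  rcases lt_trichotomy p.1 q.1 with hlt | heq | hgt
  · exact absurd hx (decode_LL_aux hM hp hq hs hs' hlt)
  · refine ⟨heq, ?_⟩
    have h1 := mp_lt_phi_fst (m := m) hM hp
    have h2 := mp_lt_phi_fst (m := m) hM hq
    rw [heq] at hx h1
    omega
  · exact absurd hx.symm (decode_LL_aux hM hq hp hs' hs hgt)

lemma decode_RR_aux (hM : IsDiagram nc M) {p q : ℕ × ℕ} {s s' : ℕ} (hp : p ∈ M) (hq : q ∈ M)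
    (hs : s ≤ m p) (hs' : s' ≤ m q) (hlt : p.2 < q.2) :
    phi M m p.2 + s ≠ phi M m q.2 + s' := by
  have h1 : phi M m (p.2 + 1) ≤ phi M m q.2 := phi_le_phi (by omega)
  have h2 := phi_right_window (m := m) hM hp
  omega

lemma decode_RR (hM : IsDiagram nc M) {p q : ℕ × ℕ} {s s' : ℕ} (hp : p ∈ M) (hq : q ∈ M)
    (hs : s ≤ m p) (hs' : s' ≤ m q) (hx : phi M m p.2 + s = phi M m q.2 + s') :
    p.2 = q.2 ∧ s = s' := by
  rcases lt_trichotomy p.2 q.2 with hlt | heq | hgt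
  · exact absurd hx (decode_RR_aux hM hp hq hs hs' hlt)
  · refine ⟨heq, ?_⟩; rw [heq] at hx; omega
  · exact absurd hx.symm (decode_RR_aux hM hq hp hs' hs hgt)

lemma decode_LR (hM : IsDiagram nc M) {p q : ℕ × ℕ} {s s' : ℕ} (hp : p ∈ M) (hq : q ∈ M)
    (hs : s ≤ m p) (hs' : s' ≤ m q) :
    phi M m p.1 - s ≠ phi M m q.2 + s' := by
  rcases lt_trichotomy p.1 q.2 with hlt | heq | hgt
  · have h1 : phi M m p.1 < phi M m q.2 := phi_lt_phi hlt
    omega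
  · exact absurd heq (fst_ne_snd hM hp hq)
  · have hne : p ≠ q := by
      intro he; subst he
      exact absurd (hM.1 p hp).2.1 (by omega)
    have := phi_gap_pair (m := m) hp hq hne (show q.2 ≤ p.1 by omega)
      (Or.inl ⟨hgt, le_refl _⟩) (Or.inr ⟨le_refl _, hgt⟩)
    omega

lemma mem_expandF {x : ℕ × ℕ} : x ∈ expandF M m ↔
    ∃ p ∈ M, ∃ s ≤ m p, x = (phi M m p.1 - s, phi M m p.2 + s) := by
  simp only [expandF, Finset.mem_biUnion, Finset.mem_image, Finset.mem_range, Nat.lt_succ_iff]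
  constructor
  · rintro ⟨p, hp, s, hs, rfl⟩; exact ⟨p, hp, s, hs, rfl⟩
  · rintro ⟨p, hp, s, hs, rfl⟩; exact ⟨p, hp, s, hs, rfl⟩

section ESide

variable {k σ b : ℕ}

lemma phi_zero (hM : IsDiagram nc M) : phi M m 0 = 0 := by
  unfold phi
  have h0 : ∑ p ∈ M, m p * ((if p.1 ≤ 0 then 1 else 0) + (if p.2 < 0 then 1 else 0)) = 0 := by
    refine Finset.sum_eq_zero fun p hp => ?_
    have := (hM.1 p hp).1
    rw [if_neg (by omega), if_neg (by omega)]
    ring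
  rw [h0]

lemma phi_top (hM : IsDiagram nc M) (hsum : ∑ a ∈ M, m a = b) :
    phi M m (nc + 1) = nc + 1 + 2 * b := by
  unfold phi
  have hc : ∀ p ∈ M, m p * ((if p.1 ≤ nc + 1 then 1 else 0) + (if p.2 < nc + 1 then 1 else 0)) = m p * 2 := by
    intro p hp
    have hb := hM.1 p hp
    rw [if_pos (by omega), if_pos (by omega)]
  rw [Finset.sum_congr rfl hc, ← Finset.sum_mul, hsum]
  ring

lemma phi_nc_le (hM : IsDiagram nc M) (hsum : ∑ a ∈ M, m a = b) :
    phi M m nc ≤ nc + 2 * b := by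
  have h1 := phi_lt_phi (M := M) (m := m) (show nc < nc + 1 by omega)
  have h2 := phi_top (m := m) hM hsum
  omega

lemma expand_mem_bounds (hM : IsDiagram nc M) (hsum : ∑ a ∈ M, m a = b)
    {p : ℕ × ℕ} (hp : p ∈ M) {s : ℕ} (hs : s ≤ m p) :
    1 ≤ phi M m p.1 - s ∧ phi M m p.1 - s < phi M m p.2 + s ∧ phi M m p.2 + s ≤ nc + 2 * b := by
  have hb := hM.1 p hp
  have h1 := mp_lt_phi_fst (m := m) hM hp
  have h2 : phi M m p.1 < phi M m p.2 := phi_lt_phi hb.2.1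
  have h3 := phi_right_window (m := m) hM hp
  have h4 : phi M m (p.2 + 1) ≤ phi M m (nc + 1) := phi_le_phi (by omega)
  have h5 := phi_top (m := m) hM hsum
  omega

lemma expand_isDiagram (hM : IsDiagram nc M) (hsum : ∑ a ∈ M, m a = b) :
    IsDiagram (nc + 2 * b) (expandF M m) := by
  constructor
  · intro x hx
    obtain ⟨p, hp, s, hs, rfl⟩ := mem_expandF.1 hx
    exact expand_mem_bounds hM hsum hp hs
  · intro x hx y hy hxy
    obtain ⟨p, hp, s, hs, rfl⟩ := mem_expandF.1 hx
    obtain ⟨q, hq, s', hs', rfl⟩ := mem_expandF.1 hy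
    refine ⟨?_, ?_, ?_, ?_⟩
    · intro he
      obtain ⟨h1, h2⟩ := decode_LL hM hp hq hs hs' he
      have : p = q := eq_of_fst hM hp hq h1
      subst this; subst h2; exact hxy rfl
    · exact decode_LR hM hp hq hs hs'
    · exact fun he => decode_LR hM hq hp hs' hs he.symm
    · intro he
      obtain ⟨h1, h2⟩ := decode_RR hM hp hq hs hs' he
      have : p = q := eq_of_snd hM hp hq h1
      subst this; subst h2; exact hxy rfl

lemma expand_card (hM : IsDiagram nc M) (hsum : ∑ a ∈ M, m a = b) :
    (expandF M m).card = M.card + b := by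
  unfold expandF
  rw [Finset.card_biUnion]
  · have hc : ∀ p ∈ M, ((Finset.range (m p + 1)).image
        fun s => (phi M m p.1 - s, phi M m p.2 + s)).card = m p + 1 := by
      intro p hp
      rw [Finset.card_image_of_injOn, Finset.card_range]
      intro s hs s' hs' he
      have := congrArg Prod.snd he
      simp only at this
      omega
    rw [Finset.sum_congr rfl hc, Finset.sum_add_distrib, hsum]
    simp [add_comm]
  · intro p hp q hq hpq
    rw [Function.onFun, Finset.disjoint_left]
    intro x hx hx'
    simp only [Finset.mem_image, Finset.mem_range, Nat.lt_succ_iff] at hx hx'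
    obtain ⟨s, hs, rfl⟩ := hx
    obtain ⟨s', hs', he⟩ := hx'
    have h1 := congrArg Prod.fst he
    simp only at h1
    obtain ⟨h2, _⟩ := decode_LL hM hq hp hs' hs h1
    exact hpq (eq_of_fst hM hp hq h2.symm)

lemma expand_arclen (C : Ctx σ nc b M m) :
    ∀ x ∈ expandF M m, x.1 + 3 ≤ x.2 := by
  intro x hx
  obtain ⟨p, hp, s, hs, rfl⟩ := mem_expandF.1 hx
  have hb := C.hM.1 p hp
  have key : phi M m p.1 + 3 ≤ phi M m p.2 := by
    rcases Nat.lt_or_ge (p.1 + 2) p.2 with hlt | hge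
    · have := phi_add_le (M := M) (m := m) (show p.1 ≤ p.2 by omega)
      omega
    · have he2 : p.2 = p.1 + 2 := by have := C.harc p hp; omega
      have hni := C.hiso p hp he2
      simp only [IsolatedVerts, Finset.mem_filter, Finset.mem_Icc, not_and, not_forall] at hni
      obtain ⟨q, hq, hqe⟩ := hni ⟨by omega, by omega⟩
      have hmq := C.hmσ q hq
      have hσ := C.hσ
      have hgap : phi M m p.1 + (p.2 - p.1) + m q ≤ phi M m p.2 := by
        rcases eq_or_ne (p.1 + 1) q.1 with h | h
        · exact phi_gap (m := m) hq (by omega) (Or.inl ⟨by omega, by omega⟩)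
        · have h2 : p.1 + 1 = q.2 := not_not.1 (hqe h)
          exact phi_gap (m := m) hq (by omega) (Or.inr ⟨by omega, by omega⟩)
      omega
  have h1 := mp_lt_phi_fst (m := m) C.hM hp
  omega

lemma expand_stack (C : Ctx σ nc b M m) :
    ∀ x ∈ expandF M m, ∃ q : ℕ × ℕ, (∀ t < σ, (q.1 + t, q.2 - t) ∈ expandF M m) ∧
      ∃ t < σ, x = (q.1 + t, q.2 - t) := by
  intro x hx
  obtain ⟨p, hp, s, hs, rfl⟩ := mem_expandF.1 hx
  have hmp := C.hmσ p hp
  have hσ := C.hσ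
  have hphi := mp_lt_phi_fst (m := m) C.hM hp
  set s' := min (m p) (s + σ - 1) with hs'
  have hs'le : s' ≤ m p := min_le_left _ _
  have hs's : s ≤ s' := by omega
  have hs'σ : σ - 1 ≤ s' := by omega
  refine ⟨(phi M m p.1 - s', phi M m p.2 + s'), ?_, ?_⟩
  · intro t ht
    refine mem_expandF.2 ⟨p, hp, s' - t, by omega, ?_⟩
    simp only [Prod.mk.injEq]
    constructor <;> omega
  · refine ⟨s' - s, by omega, ?_⟩
    simp only [Prod.mk.injEq]
    constructor <;> omega

lemma expand_notMC (C : Ctx σ nc b M m) {k : ℕ} (hMC : ¬ MutuallyCrossing k M) :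
    ¬ MutuallyCrossing k (expandF M m) := by
  intro ⟨f, hf, h1, h2, h3⟩
  have hdec : ∀ t, ∃ p, p ∈ M ∧ ∃ s ≤ m p, f t = (phi M m p.1 - s, phi M m p.2 + s) := by
    intro t
    obtain ⟨p, hp, s, hs, he⟩ := mem_expandF.1 (hf t)
    exact ⟨p, hp, s, hs, he⟩
  choose p hpM s hsle hfe using hdec
  have key : ∀ t u : Fin k, t < u → (p t).1 < (p u).1 ∧ (p t).2 < (p u).2 := by
    intro t u htu
    have hst := hsle t
    have hsu := hsle u
    have e1 : phi M m (p t).1 - s t < phi M m (p u).1 - s u := by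
      have h' := h1 htu; simp only [hfe t, hfe u] at h'; exact h'
    have e2 : phi M m (p t).2 + s t < phi M m (p u).2 + s u := by
      have h' := h2 htu; simp only [hfe t, hfe u] at h'; exact h'
    have hne : p t ≠ p u := by
      intro he; rw [he] at e1 e2; omega
    constructor
    · rcases lt_trichotomy (p t).1 (p u).1 with h | h | h
      · exact h
      · exact absurd (eq_of_fst C.hM (hpM t) (hpM u) h) hne
      · exfalso
        have w1 := phi_left_window (m := m) C.hM (hpM t)
        have w2 : phi M m (p u).1 ≤ phi M m ((p t).1 - 1) := phi_le_phi (by omega)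
        have := mp_lt_phi_fst (m := m) C.hM (hpM u)
        omega
    · rcases lt_trichotomy (p t).2 (p u).2 with h | h | h
      · exact h
      · exact absurd (eq_of_snd C.hM (hpM t) (hpM u) h) hne
      · exfalso
        have w1 := phi_right_window (m := m) C.hM (hpM u)
        have w2 : phi M m ((p u).2 + 1) ≤ phi M m (p t).2 := phi_le_phi (by omega)
        omega
  have keyc : ∀ t u : Fin k, (p t).1 < (p u).2 := by
    intro t u
    have hst := hsle t
    have hsu := hsle u
    have e3 : phi M m (p t).1 - s t < phi M m (p u).2 + s u := by
      have h' := h3 t u; simp only [hfe t, hfe u] at h'; exact h'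
    rcases lt_trichotomy (p t).1 (p u).2 with h | h | h
    · exact h
    · exact absurd h (fst_ne_snd C.hM (hpM t) (hpM u))
    · exfalso
      have hne : p t ≠ p u := by
        intro he; rw [he] at h; have := (C.hM.1 (p u) (hpM u)).2.1; omega
      have := phi_gap_pair (m := m) (hpM t) (hpM u) hne (show (p u).2 ≤ (p t).1 by omega)
        (Or.inl ⟨h, le_refl _⟩) (Or.inr ⟨le_refl _, h⟩)
      have := mp_lt_phi_fst (m := m) C.hM (hpM t)
      omega
  exact hMC ⟨p, hpM, fun t u htu => (key t u htu).1, fun t u htu => (key t u htu).2, keyc⟩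

lemma phi_lt_reflect {u v : ℕ} (h : phi M m u < phi M m v) : u < v := by
  by_contra hc
  exact absurd (phi_le_phi (M := M) (m := m) (by omega : v ≤ u)) (by omega)

lemma expand_kept (C : Ctx σ nc b M m) :
    Kept (expandF M m) = M.image (fun p => (phi M m p.1, phi M m p.2)) := by
  ext x
  simp only [Kept, Finset.mem_filter, Finset.mem_image]
  constructor
  · rintro ⟨hx, hinner⟩
    obtain ⟨p, hp, s, hs, rfl⟩ := mem_expandF.1 hx
    have hphi := mp_lt_phi_fst (m := m) C.hM hp
    rcases Nat.eq_zero_or_pos s with rfl | hs1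
    · exact ⟨p, hp, by simp⟩
    · exfalso
      apply hinner
      refine mem_expandF.2 ⟨p, hp, s - 1, by omega, ?_⟩
      simp only [Prod.mk.injEq]
      constructor <;> omega
  · rintro ⟨p, hp, rfl⟩
    have hb := C.hM.1 p hp
    refine ⟨mem_expandF.2 ⟨p, hp, 0, Nat.zero_le _, by simp⟩, ?_⟩
    intro hinner
    obtain ⟨q, hq, s', hs', he⟩ := mem_expandF.1 hinner
    have c1 : phi M m p.1 + 1 = phi M m q.1 - s' := congrArg Prod.fst he
    have c2 : phi M m p.2 - 1 = phi M m q.2 + s' := congrArg Prod.snd he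
    have hq1 : p.1 < q.1 := by
      apply phi_lt_reflect (M := M) (m := m)
      omega
    have w2 : phi M m p.1 ≤ phi M m (q.1 - 1) := phi_le_phi (by omega)
    have w1 := phi_left_window (m := m) C.hM hq
    -- forces q.1 - 1 = p.1 and s' = m q
    have hq1e : q.1 - 1 = p.1 := phi_inj (M := M) (m := m) (by omega)
    have hs'e : s' = m q := by omega
    -- second coordinate
    have hp2 : 1 ≤ phi M m p.2 := le_trans (by omega) (le_phi p.2)
    have hq2 : q.2 < p.2 := by
      apply phi_lt_reflect (M := M) (m := m)
      omega
    have w3 := phi_right_window (m := m) C.hM hq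
    have w4 : phi M m (q.2 + 1) ≤ phi M m p.2 := phi_le_phi (by omega)
    have hq2e : q.2 + 1 = p.2 := phi_inj (M := M) (m := m) (by omega)
    have : (p.1 + 1, p.2 - 1) = q := by
      have := (C.hM.1 q hq).1
      rw [Prod.ext_iff]
      constructor <;> simp only [] <;> omega
    exact C.hpar p hp (this ▸ hq)

lemma expand_keptVerts (C : Ctx σ nc b M m) {n : ℕ} (hn : n = nc + 2 * b) :
    KeptVerts n (expandF M m) = (Finset.Icc 1 nc).image (phi M m) := by
  have hkept := expand_kept C
  ext v
  simp only [KeptVerts, Finset.mem_filter, Finset.mem_Icc, Finset.mem_image]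
  constructor
  · rintro ⟨⟨hv1, hv2⟩, hv⟩
    -- find w with phi w = v
    by_contra hno
    push_neg at hno
    have h0 : phi M m 0 = 0 := phi_zero C.hM
    have htop : phi M m (nc + 1) = nc + 1 + 2 * b := phi_top C.hM C.hsum
    have hex : ∃ w0, (w0 < nc + 2 ∧ phi M m w0 < v) ∧
        ∀ u, u < nc + 2 → phi M m u < v → u ≤ w0 := by
      set S := (Finset.range (nc + 2)).filter (fun u => phi M m u < v) with hS
      have h0S : (0 : ℕ) ∈ S := by
        simp only [hS, Finset.mem_filter, Finset.mem_range]
        omega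
      have hSne : S.Nonempty := ⟨0, h0S⟩
      refine ⟨S.max' hSne, ?_, ?_⟩
      · have := S.max'_mem hSne
        simpa only [hS, Finset.mem_filter, Finset.mem_range] using this
      · intro u hu1 hu2
        exact S.le_max' u (by simp only [hS, Finset.mem_filter, Finset.mem_range]; exact ⟨hu1, hu2⟩)
    obtain ⟨w0, ⟨hw0r, hw0v⟩, hw0max⟩ := hex
    have hw0nc : w0 ≤ nc := by
      by_contra hc
      have hce : w0 = nc + 1 := by omega
      rw [hce, htop] at hw0v
      omega
    have hsucc' : v ≤ phi M m (w0 + 1) := by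
      by_contra hc
      have := hw0max (w0 + 1) (by omega) (by omega)
      omega
    rcases Nat.eq_or_lt_of_le hsucc' with heq | hlt
    · -- v = phi (w0+1)
      refine hno (w0 + 1) ⟨by omega, ?_⟩ heq.symm
      by_contra hc
      have : w0 + 1 = nc + 1 := by omega
      rw [this, htop] at heq
      omega
    · -- v strictly inside the gap
      set A := ∑ p ∈ M, m p * (if p.1 = w0 + 1 then 1 else 0) with hA
      set B := ∑ p ∈ M, m p * (if p.2 = w0 then 1 else 0) with hB
      have hinc : phi M m (w0 + 1) = phi M m w0 + 1 + (A + B) := by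
        rw [phi_increment (M := M) (m := m) (show w0 ≤ w0 + 1 by omega)]
        have hc : ∀ p ∈ M, m p * ((if w0 < p.1 ∧ p.1 ≤ w0 + 1 then 1 else 0) + (if w0 ≤ p.2 ∧ p.2 < w0 + 1 then 1 else 0))
            = m p * (if p.1 = w0 + 1 then 1 else 0) + m p * (if p.2 = w0 then 1 else 0) := by
          intro p _
          rw [← Nat.mul_add]
          congr 1
          split_ifs <;> omega
        rw [Finset.sum_congr rfl hc, Finset.sum_add_distrib, hA, hB]
        omega
      rcases Nat.lt_or_ge (phi M m w0 + B) v with hcase | hcase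
      · -- left insertion: A > 0
        have hApos : 0 < A := by omega
        have hexq : ∃ q ∈ M, q.1 = w0 + 1 := by
          by_contra hc
          push_neg at hc
          have : A = 0 := Finset.sum_eq_zero (fun p hp => by rw [if_neg (hc p hp), Nat.mul_zero])
          omega
        obtain ⟨q, hq, hq1⟩ := hexq
        have hAq : A = m q := by
          rw [hA]
          rw [Finset.sum_eq_single_of_mem q hq]
          · rw [if_pos hq1, Nat.mul_one]
          · intro r hr hne
            rw [if_neg, Nat.mul_zero]
            intro hre
            exact hne (eq_of_fst C.hM hr hq (hre.trans hq1.symm))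
        set s := phi M m (w0 + 1) - v with hs
        have hs1 : 1 ≤ s := by omega
        have hsle : s ≤ m q := by omega
        have hveq : v = phi M m q.1 - s := by rw [hq1]; omega
        have hmem : (phi M m q.1 - s, phi M m q.2 + s) ∈ expandF M m :=
          mem_expandF.2 ⟨q, hq, s, hsle, rfl⟩
        have hk := hv _ hmem (Or.inl hveq)
        rw [hkept] at hk
        simp only [Finset.mem_image] at hk
        obtain ⟨r, hr, hre⟩ := hk
        have hfst : phi M m r.1 = phi M m q.1 - s := congrArg Prod.fst hre
        obtain ⟨_, h2⟩ := decode_LL C.hM hr hq (Nat.zero_le (m r)) hsle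
          (show phi M m r.1 - 0 = phi M m q.1 - s by omega)
        omega
      · -- right insertion: B > 0
        have hBpos : 0 < B := by omega
        have hexq : ∃ q ∈ M, q.2 = w0 := by
          by_contra hc
          push_neg at hc
          have : B = 0 := Finset.sum_eq_zero (fun p hp => by rw [if_neg (hc p hp), Nat.mul_zero])
          omega
        obtain ⟨q, hq, hq2⟩ := hexq
        have hBq : B = m q := by
          rw [hB]
          rw [Finset.sum_eq_single_of_mem q hq]
          · rw [if_pos hq2, Nat.mul_one]
          · intro r hr hne
            rw [if_neg, Nat.mul_zero]
            intro hre
            exact hne (eq_of_snd C.hM hr hq (hre.trans hq2.symm))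
        set s := v - phi M m w0 with hs
        have hs1 : 1 ≤ s := by omega
        have hsle : s ≤ m q := by omega
        have hveq : v = phi M m q.2 + s := by rw [hq2]; omega
        have hmem : (phi M m q.1 - s, phi M m q.2 + s) ∈ expandF M m :=
          mem_expandF.2 ⟨q, hq, s, hsle, rfl⟩
        have hk := hv _ hmem (Or.inr hveq)
        rw [hkept] at hk
        simp only [Finset.mem_image] at hk
        obtain ⟨r, hr, hre⟩ := hk
        have hsnd : phi M m r.2 = phi M m q.2 + s := congrArg Prod.snd hre
        obtain ⟨_, h2⟩ := decode_RR C.hM hr hq (Nat.zero_le (m r)) hsle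
          (show phi M m r.2 + 0 = phi M m q.2 + s by omega)
        omega
  · rintro ⟨w, ⟨hw1, hw2⟩, rfl⟩
    refine ⟨⟨le_trans hw1 (le_phi w), ?_⟩, ?_⟩
    · have := phi_nc_le C.hM C.hsum
      have := phi_le_phi (M := M) (m := m) hw2
      omega
    · intro x hx hor
      obtain ⟨p, hp, s, hs, rfl⟩ := mem_expandF.1 hx
      have hphi := mp_lt_phi_fst (m := m) C.hM hp
      rcases hor with hco | hco
      · simp only at hco
        have hs0 : s = 0 := by
          by_contra hs0
          have hwp : w < p.1 := by
            apply phi_lt_reflect (M := M) (m := m)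
            omega
          have w2 : phi M m w ≤ phi M m (p.1 - 1) := phi_le_phi (by omega)
          have w1 := phi_left_window (m := m) C.hM hp
          omega
        rw [hkept]
        simp only [Finset.mem_image]
        exact ⟨p, hp, by simp [hs0]⟩
      · simp only at hco
        have hs0 : s = 0 := by
          by_contra hs0
          have hwp : p.2 < w := by
            apply phi_lt_reflect (M := M) (m := m)
            omega
          have w2 : phi M m (p.2 + 1) ≤ phi M m w := phi_le_phi (by omega)
          have w1 := phi_right_window (m := m) C.hM hp
          omega
        rw [hkept]
        simp only [Finset.mem_image]
        exact ⟨p, hp, by simp [hs0]⟩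

lemma expand_rank (C : Ctx σ nc b M m) {n : ℕ} (hn : n = nc + 2 * b)
    {w : ℕ} (hw1 : 1 ≤ w) (hw2 : w ≤ nc) :
    rankOf n (expandF M m) (phi M m w) = w := by
  unfold rankOf
  rw [expand_keptVerts C hn]
  have hset : ((Finset.Icc 1 nc).image (phi M m)).filter (· ≤ phi M m w)
      = (Finset.Icc 1 w).image (phi M m) := by
    ext x
    simp only [Finset.mem_filter, Finset.mem_image, Finset.mem_Icc]
    constructor
    · rintro ⟨⟨u, ⟨hu1, hu2⟩, rfl⟩, hle⟩
      exact ⟨u, ⟨hu1, phi_le_reflect hle⟩, rfl⟩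
    · rintro ⟨u, ⟨hu1, hu2⟩, rfl⟩
      exact ⟨⟨u, ⟨hu1, by omega⟩, rfl⟩, phi_le_phi hu2⟩
  rw [hset, Finset.card_image_of_injOn (fun a _ c _ h => phi_inj h), Nat.card_Icc]
  omega

lemma expand_collapse (C : Ctx σ nc b M m) {n : ℕ} (hn : n = nc + 2 * b) :
    collapse n (expandF M m) = M := by
  unfold collapse
  rw [expand_kept C, Finset.image_image]
  have : ∀ p ∈ M, (fun p : ℕ × ℕ => (rankOf n (expandF M m) p.1, rankOf n (expandF M m) p.2))
      ((fun p : ℕ × ℕ => (phi M m p.1, phi M m p.2)) p) = p := by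
    intro p hp
    have hb := C.hM.1 p hp
    simp only
    rw [expand_rank C hn hb.1 (by omega), expand_rank C hn (by omega) hb.2.2]
  calc M.image _ = M.image id := Finset.image_congr this
    _ = M := Finset.image_id

lemma expand_stackMult (C : Ctx σ nc b M m) {n : ℕ} (hn : n = nc + 2 * b)
    {a : ℕ × ℕ} (ha : a ∈ M) :
    stackMult n (expandF M m) (phi M m a.1, phi M m a.2) = m a := by
  have hmab : m a ≤ b := by
    rw [← C.hsum]
    exact Finset.single_le_sum (fun i _ => Nat.zero_le _) ha
  have hba := C.hM.1 a ha
  have hset : ((Finset.range (n + 1)).filter fun t =>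
      ∀ s ≤ t, ((phi M m a.1, phi M m a.2).1 - s, (phi M m a.1, phi M m a.2).2 + s) ∈ expandF M m)
      = Finset.range (m a + 1) := by
    ext t
    simp only [Finset.mem_filter, Finset.mem_range]
    constructor
    · rintro ⟨ht, hall⟩
      by_contra hc
      have hmat : m a + 1 ≤ t := by omega
      have hmem := hall (m a + 1) hmat
      try simp only at hmem
      obtain ⟨q, hq, s', hs', he⟩ := mem_expandF.1 hmem
      have c1 : phi M m a.1 - (m a + 1) = phi M m q.1 - s' := congrArg Prod.fst he
      have c2 : phi M m a.2 + (m a + 1) = phi M m q.2 + s' := congrArg Prod.snd he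
      rcases lt_trichotomy q.2 a.2 with h2 | h2 | h2
      · have w1 := phi_right_window (m := m) C.hM hq
        have w2 : phi M m (q.2 + 1) ≤ phi M m a.2 := phi_le_phi (by omega)
        omega
      · have : q = a := eq_of_snd C.hM hq ha h2
        subst this
        omega
      · have hgap := phi_gap (m := m) ha (show a.2 ≤ q.2 by omega) (Or.inr ⟨le_refl _, h2⟩)
        have hs'0 : s' = 0 := by omega
        have hq2 : q.2 = a.2 + 1 := by
          by_contra hc2
          have : phi M m a.2 + (q.2 - a.2) ≤ phi M m q.2 := phi_add_le (by omega)
          omega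
        -- first coordinate forces q.1 = a.1 - 1
        have hphia := mp_lt_phi_fst (m := m) C.hM ha
        have hq1lt : q.1 < a.1 := by
          apply phi_lt_reflect (M := M) (m := m)
          omega
        have w1 := phi_left_window (m := m) C.hM ha
        have w2 : phi M m q.1 ≤ phi M m (a.1 - 1) := phi_le_phi (by omega)
        have hq1 : q.1 = a.1 - 1 := phi_inj (M := M) (m := m) (by omega)
        have hqa : (q.1 + 1, q.2 - 1) = a := by
          rw [Prod.ext_iff]
          constructor <;> simp only [] <;> omega
        exact C.hpar q hq (hqa ▸ ha)
    · intro ht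
      refine ⟨by omega, fun s hs => ?_⟩
      exact mem_expandF.2 ⟨a, ha, s, by omega, rfl⟩
  unfold stackMult
  rw [hset, Finset.card_range]
  omega

lemma expand_multFun (C : Ctx σ nc b M m) {n : ℕ} (hn : n = nc + 2 * b) :
    multFun n (expandF M m) = m := by
  funext a
  unfold multFun
  by_cases ha : a ∈ M
  · have hba := C.hM.1 a ha
    have hfil : (Kept (expandF M m)).filter
        (fun p => (rankOf n (expandF M m) p.1, rankOf n (expandF M m) p.2) = a)
        = {(phi M m a.1, phi M m a.2)} := by
      ext x
      simp only [Finset.mem_filter, Finset.mem_singleton]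
      constructor
      · rintro ⟨hx, hrank⟩
        rw [expand_kept C] at hx
        simp only [Finset.mem_image] at hx
        obtain ⟨p, hp, rfl⟩ := hx
        have hbp := C.hM.1 p hp
        simp only at hrank
        rw [expand_rank C hn hbp.1 (by omega), expand_rank C hn (by omega) hbp.2.2] at hrank
        have : p = a := by
          rw [Prod.ext_iff] at hrank ⊢
          exact hrank
        rw [this]
      · rintro rfl
        constructor
        · rw [expand_kept C]
          simp only [Finset.mem_image]
          exact ⟨a, ha, rfl⟩
        · simp only
          rw [expand_rank C hn hba.1 (by omega), expand_rank C hn (by omega) hba.2.2]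
    rw [hfil, Finset.sum_singleton]
    exact expand_stackMult C hn ha
  · rw [C.hm0 a ha]
    rw [Finset.sum_eq_zero]
    intro p hp
    exfalso
    simp only [Finset.mem_filter] at hp
    obtain ⟨hx, hrank⟩ := hp
    rw [expand_kept C] at hx
    simp only [Finset.mem_image] at hx
    obtain ⟨q, hq, rfl⟩ := hx
    have hbq := C.hM.1 q hq
    simp only at hrank
    rw [expand_rank C hn hbq.1 (by omega), expand_rank C hn (by omega) hbq.2.2] at hrank
    apply ha
    rw [← hrank]
    exact hq

end ESide

section DSide

variable {n σ : ℕ} {δ : Finset (ℕ × ℕ)}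

lemma mem_kept_iff {p : ℕ × ℕ} : p ∈ Kept δ ↔ p ∈ δ ∧ (p.1 + 1, p.2 - 1) ∉ δ := by
  simp [Kept]

/-- the stack-depth set of an arc -/
def Tset (n : ℕ) (δ : Finset (ℕ × ℕ)) (q : ℕ × ℕ) : Finset ℕ :=
  (Finset.range (n + 1)).filter fun t => ∀ s ≤ t, (q.1 - s, q.2 + s) ∈ δ

lemma stackMult_eq (q : ℕ × ℕ) : stackMult n δ q = (Tset n δ q).card - 1 := rfl

lemma T_mem_iff (hδ : IsDiagram n δ) {q : ℕ × ℕ} (hq : q ∈ δ) (t : ℕ) :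
    t ∈ Tset n δ q ↔ t < (Tset n δ q).card := by
  constructor
  · intro ht
    have hsub : Finset.range (t + 1) ⊆ Tset n δ q := by
      intro u hu
      simp only [Finset.mem_range] at hu
      simp only [Tset, Finset.mem_filter, Finset.mem_range] at ht ⊢
      exact ⟨by omega, fun s hs => ht.2 s (by omega)⟩
    have := Finset.card_le_card hsub
    rw [Finset.card_range] at this
    omega
  · intro ht
    by_contra hc
    have hsub : Tset n δ q ⊆ Finset.range t := by
      intro u hu
      simp only [Finset.mem_range]
      by_contra hut
      apply hc
      simp only [Tset, Finset.mem_filter, Finset.mem_range] at hu ⊢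
      exact ⟨by omega, fun s hs => hu.2 s (by omega)⟩
    have := Finset.card_le_card hsub
    rw [Finset.card_range] at this
    omega

lemma T_zero (hδ : IsDiagram n δ) {q : ℕ × ℕ} (hq : q ∈ δ) : (0 : ℕ) ∈ Tset n δ q := by
  simp only [Tset, Finset.mem_filter, Finset.mem_range]
  refine ⟨by omega, fun s hs => ?_⟩
  have : s = 0 := by omega
  subst this
  simpa using hq

lemma T_card_pos (hδ : IsDiagram n δ) {q : ℕ × ℕ} (hq : q ∈ δ) : 1 ≤ (Tset n δ q).card :=
  Finset.card_pos.2 ⟨0, T_zero hδ hq⟩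

lemma stack_mem (hδ : IsDiagram n δ) {q : ℕ × ℕ} (hq : q ∈ δ) {s : ℕ}
    (hs : s ≤ stackMult n δ q) : (q.1 - s, q.2 + s) ∈ δ := by
  have hcard := T_card_pos hδ hq
  have hμ : stackMult n δ q < (Tset n δ q).card := by
    rw [stackMult_eq]; omega
  have := (T_mem_iff hδ hq _).2 hμ
  simp only [Tset, Finset.mem_filter] at this
  exact this.2 s hs

lemma stack_top (hδ : IsDiagram n δ) {q : ℕ × ℕ} (hq : q ∈ δ) :
    (q.1 - (stackMult n δ q + 1), q.2 + (stackMult n δ q + 1)) ∉ δ := by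
  intro hmem
  have hb := hδ.1 _ hmem
  simp only at hb
  have hT : stackMult n δ q + 1 ∈ Tset n δ q := by
    simp only [Tset, Finset.mem_filter, Finset.mem_range]
    refine ⟨by omega, fun s hs => ?_⟩
    rcases Nat.lt_or_ge s (stackMult n δ q + 1) with h | h
    · exact stack_mem hδ hq (by omega)
    · have : s = stackMult n δ q + 1 := by omega
      subst this
      exact hmem
  have := (T_mem_iff hδ hq _).1 hT
  have hcard := T_card_pos hδ hq
  rw [stackMult_eq] at this
  omega

lemma stackMult_lt_fst (hδ : IsDiagram n δ) {q : ℕ × ℕ} (hq : q ∈ δ) :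
    stackMult n δ q < q.1 := by
  have := hδ.1 _ (stack_mem hδ hq (le_refl (stackMult n δ q)))
  simp only at this
  omega

lemma stackMult_snd_le (hδ : IsDiagram n δ) {q : ℕ × ℕ} (hq : q ∈ δ) :
    q.2 + stackMult n δ q ≤ n := by
  have := hδ.1 _ (stack_mem hδ hq (le_refl (stackMult n δ q)))
  simp only at this
  omega

lemma descent (hδ : IsDiagram n δ) (harc : ∀ p ∈ δ, p.1 + 3 ≤ p.2) :
    ∀ p ∈ δ, ∃ q ∈ Kept δ, ∃ s ≤ stackMult n δ q, p = (q.1 - s, q.2 + s) := by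
  have H : ∀ N p, p ∈ δ → p.2 - p.1 ≤ N →
      ∃ d, (∀ j ≤ d, (p.1 + j, p.2 - j) ∈ δ) ∧ (p.1 + d, p.2 - d) ∈ Kept δ := by
    intro N
    induction N with
    | zero => intro p hp h0; exact absurd (harc p hp) (by omega)
    | succ N ih =>
      intro p hp hN
      by_cases hk : p ∈ Kept δ
      · refine ⟨0, fun j hj => ?_, by simpa using hk⟩
        have : j = 0 := by omega
        subst this
        simpa using hp
      · have hinner : (p.1 + 1, p.2 - 1) ∈ δ := by
          rw [mem_kept_iff] at hk
          push_neg at hk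
          exact hk hp
        have harcp := harc p hp
        obtain ⟨d, hall, hkept⟩ := ih (p.1 + 1, p.2 - 1) hinner (by simp only; omega)
        refine ⟨d + 1, fun j hj => ?_, ?_⟩
        · rcases Nat.eq_zero_or_pos j with rfl | hj1
          · simpa using hp
          · have hmem := hall (j - 1) (by omega)
            have he : (p.1 + 1 + (j - 1), p.2 - 1 - (j - 1)) = (p.1 + j, p.2 - j) := by
              rw [Prod.ext_iff]
              constructor <;> simp only [] <;> omega
            rwa [he] at hmem
        · have he : (p.1 + 1 + d, p.2 - 1 - d) = (p.1 + (d + 1), p.2 - (d + 1)) := by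
            rw [Prod.ext_iff]
            constructor <;> simp only [] <;> omega
          rwa [he] at hkept
  intro p hp
  obtain ⟨d, hall, hkept⟩ := H (p.2 - p.1) p hp (le_refl _)
  have hdp : p.1 + d < p.2 - d := (hδ.1 _ (hall d (le_refl d))).2.1
  refine ⟨(p.1 + d, p.2 - d), hkept, d, ?_, ?_⟩
  · have hdT : d ∈ Tset n δ (p.1 + d, p.2 - d) := by
      simp only [Tset, Finset.mem_filter, Finset.mem_range]
      have hp2n := (hδ.1 p hp).2.2
      refine ⟨by omega, fun s hs => ?_⟩
      have hmem := hall (d - s) (by omega)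
      have he : (p.1 + (d - s), p.2 - (d - s)) = ((p.1 + d, p.2 - d).1 - s, (p.1 + d, p.2 - d).2 + s) := by
        rw [Prod.ext_iff]
        constructor <;> simp only [] <;> omega
      rwa [he] at hmem
    have := (T_mem_iff hδ (mem_kept_iff.1 hkept).1 d).1 hdT
    rw [stackMult_eq]
    have := T_card_pos hδ (mem_kept_iff.1 hkept).1
    omega
  · rw [Prod.ext_iff]
    constructor <;> simp only [] <;> omega

lemma stack_unique_aux (hδ : IsDiagram n δ) {q q' : ℕ × ℕ} {s s' : ℕ}
    (hq : q ∈ Kept δ) (hq' : q' ∈ Kept δ) (hs : s ≤ stackMult n δ q) (hs' : s' ≤ stackMult n δ q')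
    (he : (q.1 - s, q.2 + s) = (q'.1 - s', q'.2 + s')) : ¬ s < s' := by
  intro hlt
  have hqδ := (mem_kept_iff.1 hq).1
  have hq'δ := (mem_kept_iff.1 hq').1
  have hqb := hδ.1 q hqδ
  have harcmem := stack_mem hδ hq'δ (show s' - (s + 1) ≤ stackMult n δ q' by omega)
  have he1 : q.1 - s = q'.1 - s' := congrArg Prod.fst he
  have he2 : q.2 + s = q'.2 + s' := congrArg Prod.snd he
  have hb1 : 1 ≤ q'.1 - s' := (hδ.1 _ (stack_mem hδ hq'δ hs')).1
  have hμq' := stackMult_lt_fst hδ hq'δ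
  have hco : (q'.1 - (s' - (s + 1)), q'.2 + (s' - (s + 1))) = (q.1 + 1, q.2 - 1) := by
    rw [Prod.ext_iff]
    constructor <;> simp only [] <;> omega
  rw [hco] at harcmem
  exact (mem_kept_iff.1 hq).2 harcmem

lemma stack_unique (hδ : IsDiagram n δ) {q q' : ℕ × ℕ} {s s' : ℕ}
    (hq : q ∈ Kept δ) (hq' : q' ∈ Kept δ) (hs : s ≤ stackMult n δ q) (hs' : s' ≤ stackMult n δ q')
    (he : (q.1 - s, q.2 + s) = (q'.1 - s', q'.2 + s')) : q = q' ∧ s = s' := by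
  have h1 := stack_unique_aux hδ hq hq' hs hs' he
  have h2 := stack_unique_aux hδ hq' hq hs' hs he.symm
  have hss : s = s' := by omega
  subst hss
  have he1 : q.1 - s = q'.1 - s := congrArg Prod.fst he
  have he2 : q.2 + s = q'.2 + s := congrArg Prod.snd he
  have hb1 : 1 ≤ q.1 - s := (hδ.1 _ (stack_mem hδ (mem_kept_iff.1 hq).1 hs)).1
  have hb2 : 1 ≤ q'.1 - s := (hδ.1 _ (stack_mem hδ (mem_kept_iff.1 hq').1 hs')).1
  refine ⟨?_, rfl⟩
  rw [Prod.ext_iff]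
  constructor <;> omega

lemma kept_sigma (hδ : IsDiagram n δ) (hσ : 2 ≤ σ)
    (hstack : ∀ p ∈ δ, ∃ q : ℕ × ℕ, (∀ t < σ, (q.1 + t, q.2 - t) ∈ δ) ∧
      ∃ t < σ, p = (q.1 + t, q.2 - t))
    {q : ℕ × ℕ} (hq : q ∈ Kept δ) : σ - 1 ≤ stackMult n δ q := by
  have hqδ := (mem_kept_iff.1 hq).1
  have hqb := hδ.1 q hqδ
  obtain ⟨r, hrall, t0, ht0, hqe⟩ := hstack q hqδ
  have hq1 : q.1 = r.1 + t0 := congrArg Prod.fst hqe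
  have hq2 : q.2 = r.2 - t0 := congrArg Prod.snd hqe
  have hrb := hδ.1 _ (hrall t0 ht0)
  simp only at hrb
  have ht0e : t0 = σ - 1 := by
    by_contra hc
    have hmem := hrall (t0 + 1) (by omega)
    have hco : (r.1 + (t0 + 1), r.2 - (t0 + 1)) = (q.1 + 1, q.2 - 1) := by
      rw [Prod.ext_iff]
      constructor <;> simp only [] <;> omega
    rw [hco] at hmem
    exact (mem_kept_iff.1 hq).2 hmem
  have hT : σ - 1 ∈ Tset n δ q := by
    simp only [Tset, Finset.mem_filter, Finset.mem_range]
    have hout := hδ.1 _ (hrall 0 (by omega))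
    constructor
    · omega
    · intro s hs
      have hmem := hrall (t0 - s) (by omega)
      have hco : (r.1 + (t0 - s), r.2 - (t0 - s)) = (q.1 - s, q.2 + s) := by
        rw [Prod.ext_iff]
        constructor <;> simp only [] <;> omega
      rwa [hco] at hmem
  have := (T_mem_iff hδ hqδ _).1 hT
  rw [stackMult_eq]
  omega

lemma stack_removed (hδ : IsDiagram n δ) {q : ℕ × ℕ} (hq : q ∈ Kept δ) {s : ℕ}
    (hs1 : 1 ≤ s) (hs : s ≤ stackMult n δ q) : (q.1 - s, q.2 + s) ∉ Kept δ := by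
  intro hk
  have hqδ := (mem_kept_iff.1 hq).1
  have hμ := stackMult_lt_fst hδ hqδ
  have hqb := hδ.1 q hqδ
  have hinner : (q.1 - (s - 1), q.2 + (s - 1)) ∈ δ := stack_mem hδ hqδ (by omega)
  have hco : (q.1 - (s - 1), q.2 + (s - 1)) = ((q.1 - s, q.2 + s).1 + 1, (q.1 - s, q.2 + s).2 - 1) := by
    rw [Prod.ext_iff]
    constructor <;> simp only [] <;> omega
  rw [hco] at hinner
  exact (mem_kept_iff.1 hk).2 hinner

lemma delta_biUnion (hδ : IsDiagram n δ) (harc : ∀ p ∈ δ, p.1 + 3 ≤ p.2) :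
    δ = (Kept δ).biUnion (fun q => (Finset.range (stackMult n δ q + 1)).image
      fun s => (q.1 - s, q.2 + s)) := by
  ext x
  simp only [Finset.mem_biUnion, Finset.mem_image, Finset.mem_range, Nat.lt_succ_iff]
  constructor
  · intro hx
    obtain ⟨q, hq, s, hs, rfl⟩ := descent hδ harc x hx
    exact ⟨q, hq, s, hs, rfl⟩
  · rintro ⟨q, hq, s, hs, rfl⟩
    exact stack_mem hδ (mem_kept_iff.1 hq).1 hs

lemma card_delta (hδ : IsDiagram n δ) (harc : ∀ p ∈ δ, p.1 + 3 ≤ p.2) :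
    δ.card = (∑ q ∈ Kept δ, stackMult n δ q) + (Kept δ).card := by
  conv_lhs => rw [delta_biUnion hδ harc]
  rw [Finset.card_biUnion]
  · have hc : ∀ q ∈ Kept δ, ((Finset.range (stackMult n δ q + 1)).image
        fun s => (q.1 - s, q.2 + s)).card = stackMult n δ q + 1 := by
      intro q hq
      rw [Finset.card_image_of_injOn, Finset.card_range]
      intro s hs s' hs' he
      have := congrArg Prod.snd he
      simp only at this
      omega
    rw [Finset.sum_congr rfl hc, Finset.sum_add_distrib, Finset.sum_const, smul_eq_mul, mul_one]
  · intro q hq q' hq' hne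
    rw [Function.onFun, Finset.disjoint_left]
    intro x hx hx'
    simp only [Finset.mem_image, Finset.mem_range, Nat.lt_succ_iff] at hx hx'
    obtain ⟨s, hs, rfl⟩ := hx
    obtain ⟨s', hs', he⟩ := hx'
    exact hne (stack_unique hδ hq hq' hs hs' he.symm).1

lemma kept_mem_KV (hδ : IsDiagram n δ) {q : ℕ × ℕ} (hq : q ∈ Kept δ) :
    q.1 ∈ KeptVerts n δ ∧ q.2 ∈ KeptVerts n δ := by
  have hqδ := (mem_kept_iff.1 hq).1
  have hqb := hδ.1 q hqδ
  constructor
  · simp only [KeptVerts, Finset.mem_filter, Finset.mem_Icc]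
    refine ⟨⟨by omega, by omega⟩, fun p hp hor => ?_⟩
    rcases hor with h | h
    · rwa [eq_of_fst hδ hp hqδ h.symm]
    · exact absurd trivial (fun _ => (fst_ne_snd hδ hqδ hp) (by first | exact h | exact h.symm))
  · simp only [KeptVerts, Finset.mem_filter, Finset.mem_Icc]
    refine ⟨⟨by omega, by omega⟩, fun p hp hor => ?_⟩
    rcases hor with h | h
    · exact absurd trivial (fun _ => (fst_ne_snd hδ hp hqδ) (by first | exact h | exact h.symm))
    · rwa [eq_of_snd hδ hp hqδ h.symm]

lemma removed_not_KV (hδ : IsDiagram n δ) {q : ℕ × ℕ} (hq : q ∈ Kept δ) {s : ℕ}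
    (hs1 : 1 ≤ s) (hs : s ≤ stackMult n δ q) :
    q.1 - s ∉ KeptVerts n δ ∧ q.2 + s ∉ KeptVerts n δ := by
  have hqδ := (mem_kept_iff.1 hq).1
  have hmem := stack_mem hδ hqδ hs
  have hnk := stack_removed hδ hq hs1 hs
  constructor
  · intro hv
    simp only [KeptVerts, Finset.mem_filter] at hv
    exact hnk (hv.2 _ hmem (Or.inl rfl))
  · intro hv
    simp only [KeptVerts, Finset.mem_filter] at hv
    exact hnk (hv.2 _ hmem (Or.inr rfl))

lemma removed_char (hδ : IsDiagram n δ) (harc : ∀ p ∈ δ, p.1 + 3 ≤ p.2) {v : ℕ}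
    (hv1 : 1 ≤ v) (hv2 : v ≤ n) (hv : v ∉ KeptVerts n δ) :
    ∃ q ∈ Kept δ, ∃ s, 1 ≤ s ∧ s ≤ stackMult n δ q ∧ (v = q.1 - s ∨ v = q.2 + s) := by
  have hex : ∃ p ∈ δ, (v = p.1 ∨ v = p.2) ∧ p ∉ Kept δ := by
    by_contra hc
    push_neg at hc
    apply hv
    simp only [KeptVerts, Finset.mem_filter, Finset.mem_Icc]
    exact ⟨⟨hv1, hv2⟩, fun p hp hor => hc p hp hor⟩
  obtain ⟨p, hp, hor, hnk⟩ := hex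
  obtain ⟨q, hq, s, hs, rfl⟩ := descent hδ harc p hp
  have hs1 : 1 ≤ s := by
    rcases Nat.eq_zero_or_pos s with rfl | h
    · exfalso; apply hnk; simpa using hq
    · exact h
  exact ⟨q, hq, s, hs1, hs, hor⟩

lemma rank_mono {u v : ℕ} (huv : u ≤ v) : rankOf n δ u ≤ rankOf n δ v := by
  apply Finset.card_le_card
  intro x hx
  rw [Finset.mem_filter] at hx ⊢
  exact ⟨hx.1, le_trans (hx.2 : x ≤ u) huv⟩

lemma rank_strict {u v : ℕ} (hv : v ∈ KeptVerts n δ) (huv : u < v) :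
    rankOf n δ u < rankOf n δ v := by
  apply Finset.card_lt_card
  rw [Finset.ssubset_iff_of_subset]
  · refine ⟨v, Finset.mem_filter.2 ⟨hv, le_refl v⟩, ?_⟩
    rw [Finset.mem_filter]
    rintro ⟨-, hc⟩
    exact absurd (hc : v ≤ u) (by omega)
  · intro x hx
    rw [Finset.mem_filter] at hx ⊢
    exact ⟨hx.1, le_trans (hx.2 : x ≤ u) (by omega)⟩

lemma rank_lt_reflect {u v : ℕ} (h : rankOf n δ u < rankOf n δ v) : u < v := by
  by_contra hc
  have := rank_mono (n := n) (δ := δ) (show v ≤ u by omega)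
  omega

lemma rank_inj {u v : ℕ} (hu : u ∈ KeptVerts n δ) (hv : v ∈ KeptVerts n δ)
    (h : rankOf n δ u = rankOf n δ v) : u = v := by
  rcases lt_trichotomy u v with hc | hc | hc
  · have := rank_strict hv hc; omega
  · exact hc
  · have := rank_strict hu hc; omega

lemma rank_pos {v : ℕ} (hv : v ∈ KeptVerts n δ) : 1 ≤ rankOf n δ v := by
  apply Finset.card_pos.2
  exact ⟨v, Finset.mem_filter.2 ⟨hv, le_refl v⟩⟩

lemma rank_le_card (v : ℕ) : rankOf n δ v ≤ (KeptVerts n δ).card :=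
  Finset.card_le_card (Finset.filter_subset _ _)

lemma remSet_pairwise_disjoint (hδ : IsDiagram n δ) {q q' : ℕ × ℕ}
    (hq : q ∈ Kept δ) (hq' : q' ∈ Kept δ) (hne : q ≠ q') :
    Disjoint
      (((Finset.Icc 1 (stackMult n δ q)).image (fun s => q.1 - s)) ∪
       ((Finset.Icc 1 (stackMult n δ q)).image (fun s => q.2 + s)))
      (((Finset.Icc 1 (stackMult n δ q')).image (fun s => q'.1 - s)) ∪
       ((Finset.Icc 1 (stackMult n δ q')).image (fun s => q'.2 + s))) := by
  rw [Finset.disjoint_left]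
  intro x hx hx'
  have hqδ := (mem_kept_iff.1 hq).1
  have hq'δ := (mem_kept_iff.1 hq').1
  simp only [Finset.mem_union, Finset.mem_image, Finset.mem_Icc] at hx hx'
  apply hne
  rcases hx with ⟨s, ⟨hs1, hs⟩, rfl⟩ | ⟨s, ⟨hs1, hs⟩, rfl⟩ <;>
    rcases hx' with ⟨s', ⟨hs1', hs'⟩, he⟩ | ⟨s', ⟨hs1', hs'⟩, he⟩
  · have h1 := stack_mem hδ hqδ hs
    have h2 := stack_mem hδ hq'δ hs'
    have : (q'.1 - s', q'.2 + s') = (q.1 - s, q.2 + s) :=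
      eq_of_fst hδ h2 h1 he
    exact (stack_unique hδ hq hq' hs hs' this.symm).1
  · have h1 := stack_mem hδ hqδ hs
    have h2 := stack_mem hδ hq'δ hs'
    exact absurd trivial (fun _ => (fst_ne_snd hδ h1 h2) (by first | exact he | exact he.symm))
  · have h1 := stack_mem hδ hqδ hs
    have h2 := stack_mem hδ hq'δ hs'
    exact absurd trivial (fun _ => (fst_ne_snd hδ h2 h1) (by first | exact he | exact he.symm))
  · have h1 := stack_mem hδ hqδ hs
    have h2 := stack_mem hδ hq'δ hs'
    have : (q'.1 - s', q'.2 + s') = (q.1 - s, q.2 + s) :=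
      eq_of_snd hδ h2 h1 he
    exact (stack_unique hδ hq hq' hs hs' this.symm).1

lemma KV_card (hδ : IsDiagram n δ) (harc : ∀ p ∈ δ, p.1 + 3 ≤ p.2) :
    (KeptVerts n δ).card + 2 * (∑ q ∈ Kept δ, stackMult n δ q) = n := by
  classical
  have hsplit := Finset.card_filter_add_card_filter_not
    (s := Finset.Icc 1 n) (p := fun v => ∀ p ∈ δ, (v = p.1 ∨ v = p.2) → p ∈ Kept δ)
  have hKV : (KeptVerts n δ).card = ((Finset.Icc 1 n).filter
      (fun v => ∀ p ∈ δ, (v = p.1 ∨ v = p.2) → p ∈ Kept δ)).card := rfl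
  set Rem := (Finset.Icc 1 n).filter
    (fun v => ¬ ∀ p ∈ δ, (v = p.1 ∨ v = p.2) → p ∈ Kept δ) with hRem
  have hRemEq : Rem = (Kept δ).biUnion (fun q =>
      ((Finset.Icc 1 (stackMult n δ q)).image (fun s => q.1 - s)) ∪
      ((Finset.Icc 1 (stackMult n δ q)).image (fun s => q.2 + s))) := by
    ext v
    simp only [hRem, Finset.mem_filter, Finset.mem_Icc, Finset.mem_biUnion, Finset.mem_union,
      Finset.mem_image]
    constructor
    · rintro ⟨⟨hv1, hv2⟩, hnv⟩
      have hv' : v ∉ KeptVerts n δ := by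
        simp only [KeptVerts, Finset.mem_filter, Finset.mem_Icc]
        intro hc
        exact hnv hc.2
      obtain ⟨q, hq, s, hs1, hs, hor⟩ := removed_char hδ harc hv1 hv2 hv'
      rcases hor with rfl | rfl
      · exact ⟨q, hq, Or.inl ⟨s, ⟨hs1, hs⟩, rfl⟩⟩
      · exact ⟨q, hq, Or.inr ⟨s, ⟨hs1, hs⟩, rfl⟩⟩
    · rintro ⟨q, hq, hor⟩
      have hqδ := (mem_kept_iff.1 hq).1
      rcases hor with ⟨s, ⟨hs1, hs⟩, rfl⟩ | ⟨s, ⟨hs1, hs⟩, rfl⟩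
      · have hb := hδ.1 _ (stack_mem hδ hqδ hs)
        have := (removed_not_KV hδ hq hs1 hs).1
        simp only [KeptVerts, Finset.mem_filter, Finset.mem_Icc] at this
        refine ⟨⟨by omega, by omega⟩, fun hc => this ⟨⟨by omega, by omega⟩, hc⟩⟩
      · have hb := hδ.1 _ (stack_mem hδ hqδ hs)
        have := (removed_not_KV hδ hq hs1 hs).2
        simp only [KeptVerts, Finset.mem_filter, Finset.mem_Icc] at this
        refine ⟨⟨by omega, by omega⟩, fun hc => this ⟨⟨by omega, by omega⟩, hc⟩⟩
  have hRemCard : Rem.card = 2 * (∑ q ∈ Kept δ, stackMult n δ q) := by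
    rw [hRemEq, Finset.card_biUnion]
    · have hc : ∀ q ∈ Kept δ, (((Finset.Icc 1 (stackMult n δ q)).image (fun s => q.1 - s)) ∪
          ((Finset.Icc 1 (stackMult n δ q)).image (fun s => q.2 + s))).card
          = 2 * stackMult n δ q := by
        intro q hq
        have hqδ := (mem_kept_iff.1 hq).1
        have hμ := stackMult_lt_fst hδ hqδ
        rw [Finset.card_union_of_disjoint]
        · rw [Finset.card_image_of_injOn, Finset.card_image_of_injOn, Nat.card_Icc]
          · omega
          · intro a ha c hc hac
            simp only [Finset.coe_Icc, Set.mem_Icc] at ha hc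
            first
            | (have hac' : q.1 - a = q.1 - c := hac; omega)
            | (have hac' : q.2 + a = q.2 + c := hac; omega)
          · intro a ha c hc hac
            simp only [Finset.coe_Icc, Set.mem_Icc] at ha hc
            first
            | (have hac' : q.1 - a = q.1 - c := hac; omega)
            | (have hac' : q.2 + a = q.2 + c := hac; omega)
        · rw [Finset.disjoint_left]
          rintro x hx hx'
          simp only [Finset.mem_image, Finset.mem_Icc] at hx hx'
          obtain ⟨s, ⟨hs1, hs⟩, rfl⟩ := hx
          obtain ⟨s', ⟨hs1', hs'⟩, he⟩ := hx'
          have h1 := stack_mem hδ hqδ hs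
          have h2 := stack_mem hδ hqδ hs'
          exact fst_ne_snd hδ h1 h2 he.symm
      rw [Finset.sum_congr rfl hc, Finset.mul_sum]
    · intro q hq q' hq' hne
      exact remSet_pairwise_disjoint hδ hq hq' hne
  rw [Nat.card_Icc] at hsplit
  rw [hKV]
  omega

lemma rankpair_injOn (hδ : IsDiagram n δ) {q q' : ℕ × ℕ} (hq : q ∈ Kept δ) (hq' : q' ∈ Kept δ)
    (he : (rankOf n δ q.1, rankOf n δ q.2) = (rankOf n δ q'.1, rankOf n δ q'.2)) : q = q' := by
  have h1 := congrArg Prod.fst he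
  have h2 := congrArg Prod.snd he
  simp only at h1 h2
  have hk := kept_mem_KV hδ hq
  have hk' := kept_mem_KV hδ hq'
  have e1 : q.1 = q'.1 := rank_inj hk.1 hk'.1 h1
  exact eq_of_fst hδ (mem_kept_iff.1 hq).1 (mem_kept_iff.1 hq').1 e1

lemma mem_collapse {a : ℕ × ℕ} : a ∈ collapse n δ ↔
    ∃ q ∈ Kept δ, (rankOf n δ q.1, rankOf n δ q.2) = a := by
  simp [collapse]

/-- if x lies in the left interval of the stack of t, no arc has x as a second coordinate,
and a kept arc with x as first coordinate must be t itself -/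
lemma hit_left (hδ : IsDiagram n δ) {t : ℕ × ℕ} (ht : t ∈ Kept δ) {s x : ℕ}
    (hs : s ≤ stackMult n δ t) (hx1 : t.1 - s ≤ x) (hx2 : x ≤ t.1) :
    (∀ a ∈ δ, a.2 ≠ x) ∧ (∀ a ∈ Kept δ, a.1 = x → a = t ∧ x = t.1) := by
  have htδ := (mem_kept_iff.1 ht).1
  have hμ := stackMult_lt_fst hδ htδ
  set w := t.1 - x with hw
  have hwle : w ≤ s := by omega
  have hmem : (t.1 - w, t.2 + w) ∈ δ := stack_mem hδ htδ (by omega)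
  have hxw : t.1 - w = x := by omega
  constructor
  · intro a ha hax
    apply fst_ne_snd hδ hmem ha
    rw [hxw]
    exact hax.symm
  · intro a ha hax
    have hae : a = (t.1 - w, t.2 + w) := eq_of_fst hδ (mem_kept_iff.1 ha).1 hmem (by omega)
    have hw0 : w = 0 := by
      by_contra hc
      rw [hae] at ha
      exact stack_removed hδ ht (by omega) (by omega) ha
    constructor
    · rw [hae, hw0]
      simp only [Nat.sub_zero, Nat.add_zero]
    · omega

lemma hit_right (hδ : IsDiagram n δ) {t : ℕ × ℕ} (ht : t ∈ Kept δ) {s x : ℕ}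
    (hs : s ≤ stackMult n δ t) (hx1 : t.2 ≤ x) (hx2 : x ≤ t.2 + s) :
    (∀ a ∈ δ, a.1 ≠ x) ∧ (∀ a ∈ Kept δ, a.2 = x → a = t ∧ x = t.2) := by
  have htδ := (mem_kept_iff.1 ht).1
  have hμ := stackMult_lt_fst hδ htδ
  set w := x - t.2 with hw
  have hwle : w ≤ s := by omega
  have hmem : (t.1 - w, t.2 + w) ∈ δ := stack_mem hδ htδ (by omega)
  have hxw : t.2 + w = x := by omega
  constructor
  · intro a ha hax
    apply fst_ne_snd hδ ha hmem
    rw [hxw]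
    exact hax
  · intro a ha hax
    have hae : a = (t.1 - w, t.2 + w) := eq_of_snd hδ (mem_kept_iff.1 ha).1 hmem (by omega)
    have hw0 : w = 0 := by
      by_contra hc
      rw [hae] at ha
      exact stack_removed hδ ht (by omega) (by omega) ha
    constructor
    · rw [hae, hw0]
      simp only [Nat.sub_zero, Nat.add_zero]
    · omega

lemma exists_survivor (hδ : IsDiagram n δ) (harc : ∀ p ∈ δ, p.1 + 3 ≤ p.2)
    {q : ℕ × ℕ} (hq : q ∈ Kept δ) : ∃ v ∈ KeptVerts n δ, q.1 < v ∧ v < q.2 := by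
  have hqδ := (mem_kept_iff.1 hq).1
  have hqb := hδ.1 q hqδ
  have harcq := harc q hqδ
  by_cases hkv : q.1 + 1 ∈ KeptVerts n δ
  · exact ⟨q.1 + 1, hkv, by omega, by omega⟩
  · obtain ⟨t, ht, s, hs1, hs, hor⟩ := removed_char hδ harc (by omega) (by omega : q.1 + 1 ≤ n) hkv
    have htδ := (mem_kept_iff.1 ht).1
    have hμt := stackMult_lt_fst hδ htδ
    rcases hor with he | he
    · -- q.1 + 1 = t.1 - s : survivor is t.1
      have ht1 : q.1 + 1 < t.1 := by omega
      have ht1q2 : t.1 < q.2 := by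
        by_contra hc
        exact (hit_left hδ ht hs (show t.1 - s ≤ q.2 by omega) (by omega)).1 q hqδ rfl
      exact ⟨t.1, (kept_mem_KV hδ ht).1, by omega, ht1q2⟩
    · -- q.1 + 1 = t.2 + s : impossible, q.1 would be inside the right interval
      exfalso
      have ht2 : t.2 ≤ q.1 := by
        have : q.1 ≠ t.2 := fst_ne_snd hδ hqδ htδ
        omega
      exact (hit_right hδ ht hs ht2 (by omega)).1 q hqδ rfl

lemma collapse_isDiagram (hδ : IsDiagram n δ) (harc : ∀ p ∈ δ, p.1 + 3 ≤ p.2) :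
    IsDiagram ((KeptVerts n δ).card) (collapse n δ) := by
  constructor
  · intro a ha
    obtain ⟨q, hq, rfl⟩ := mem_collapse.1 ha
    have hk := kept_mem_KV hδ hq
    have hqb := hδ.1 q (mem_kept_iff.1 hq).1
    exact ⟨rank_pos hk.1, rank_strict hk.2 hqb.2.1, rank_le_card q.2⟩
  · intro a ha a' ha' hne
    obtain ⟨q, hq, rfl⟩ := mem_collapse.1 ha
    obtain ⟨q', hq', rfl⟩ := mem_collapse.1 ha'
    have hqδ := (mem_kept_iff.1 hq).1
    have hq'δ := (mem_kept_iff.1 hq').1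
    have hk := kept_mem_KV hδ hq
    have hk' := kept_mem_KV hδ hq'
    have hqq' : q ≠ q' := fun he => hne (by rw [he])
    refine ⟨?_, ?_, ?_, ?_⟩ <;> simp only [] <;> intro he
    · exact hqq' (eq_of_fst hδ hqδ hq'δ (rank_inj hk.1 hk'.1 he))
    · exact fst_ne_snd hδ hqδ hq'δ (rank_inj hk.1 hk'.2 he)
    · exact fst_ne_snd hδ hq'δ hqδ (rank_inj hk'.1 hk.2 he.symm)
    · exact hqq' (eq_of_snd hδ hqδ hq'δ (rank_inj hk.2 hk'.2 he))

lemma collapse_card (hδ : IsDiagram n δ) : (collapse n δ).card = (Kept δ).card := by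
  unfold collapse
  rw [Finset.card_image_of_injOn]
  intro q hq q' hq' he
  exact rankpair_injOn hδ (by simpa using hq) (by simpa using hq') he

lemma collapse_notMC (hδ : IsDiagram n δ) {k : ℕ} (hMC : ¬ MutuallyCrossing k δ) :
    ¬ MutuallyCrossing k (collapse n δ) := by
  intro ⟨f, hf, h1, h2, h3⟩
  have hdec : ∀ t, ∃ q, q ∈ Kept δ ∧ (rankOf n δ q.1, rankOf n δ q.2) = f t :=
    fun t => by
      obtain ⟨q, hq, he⟩ := mem_collapse.1 (hf t)
      exact ⟨q, hq, he⟩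
  choose g hgK hge using hdec
  apply hMC
  refine ⟨g, fun t => (mem_kept_iff.1 (hgK t)).1, ?_, ?_, ?_⟩
  · intro t u htu
    have := h1 htu
    simp only [← hge t, ← hge u] at this
    exact rank_lt_reflect this
  · intro t u htu
    have := h2 htu
    simp only [← hge t, ← hge u] at this
    exact rank_lt_reflect this
  · intro t u
    have := h3 t u
    simp only [← hge t, ← hge u] at this
    exact rank_lt_reflect this

lemma collapse_arclen (hδ : IsDiagram n δ) (harc : ∀ p ∈ δ, p.1 + 3 ≤ p.2)
    {q : ℕ × ℕ} (hq : q ∈ Kept δ) : rankOf n δ q.1 + 2 ≤ rankOf n δ q.2 := by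
  obtain ⟨v, hv, hv1, hv2⟩ := exists_survivor hδ harc hq
  have hk := kept_mem_KV hδ hq
  have h1 := rank_strict (δ := δ) hv hv1
  have h2 := rank_strict (δ := δ) hk.2 hv2
  omega

lemma collapse_noparallel (hδ : IsDiagram n δ) (harc : ∀ p ∈ δ, p.1 + 3 ≤ p.2)
    (hσmin : ∀ r ∈ Kept δ, 1 ≤ stackMult n δ r)
    {q : ℕ × ℕ} (hq : q ∈ Kept δ) :
    ((rankOf n δ q.1, rankOf n δ q.2).1 + 1, (rankOf n δ q.1, rankOf n δ q.2).2 - 1)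
      ∉ collapse n δ := by
  simp only []
  intro hc
  obtain ⟨r, hr, hre⟩ := mem_collapse.1 hc
  have hqδ := (mem_kept_iff.1 hq).1
  have hrδ := (mem_kept_iff.1 hr).1
  have hqb := hδ.1 q hqδ
  have hrb := hδ.1 r hrδ
  have hkq := kept_mem_KV hδ hq
  have hkr := kept_mem_KV hδ hr
  have hμr := stackMult_lt_fst hδ hrδ
  have hμr1 := hσmin r hr
  have hal := collapse_arclen hδ harc hq
  have hre1 : rankOf n δ r.1 = rankOf n δ q.1 + 1 := congrArg Prod.fst hre
  have hre2 : rankOf n δ r.2 = rankOf n δ q.2 - 1 := congrArg Prod.snd hre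
  have hqr1 : q.1 < r.1 := rank_lt_reflect (n := n) (δ := δ) (by omega)
  have hqr2 : r.2 < q.2 := rank_lt_reflect (n := n) (δ := δ) (by omega)
  have noLeft : ∀ v ∈ KeptVerts n δ, ¬ (q.1 < v ∧ v < r.1) := by
    rintro v hv ⟨h1, h2⟩
    have := rank_strict (δ := δ) hv h1
    have := rank_strict (δ := δ) hkr.1 h2
    omega
  have noRight : ∀ v ∈ KeptVerts n δ, ¬ (r.2 < v ∧ v < q.2) := by
    rintro v hv ⟨h1, h2⟩
    have := rank_strict (δ := δ) hv h1
    have := rank_strict (δ := δ) hkq.2 h2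
    omega
  -- left analysis
  have hL : q.1 + 1 = r.1 ∨ q.1 + 1 = r.1 - stackMult n δ r := by
    rcases Nat.eq_or_lt_of_le (show q.1 + 1 ≤ r.1 by omega) with he | hlt
    · exact Or.inl he
    · have hkv : q.1 + 1 ∉ KeptVerts n δ := by
        intro hkv
        exact noLeft _ hkv ⟨by omega, hlt⟩
      obtain ⟨t, ht, s, hs1, hs, hor⟩ := removed_char hδ harc (by omega) (by omega : q.1 + 1 ≤ n) hkv
      have htδ := (mem_kept_iff.1 ht).1
      have hμt := stackMult_lt_fst hδ htδ
      rcases hor with he' | he'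
      · -- q.1+1 = t.1 - s
        have ht1 : q.1 + 1 < t.1 := by omega
        rcases lt_trichotomy t.1 r.1 with hc1 | hc1 | hc1
        · exact absurd (⟨by omega, hc1⟩ : q.1 < t.1 ∧ t.1 < r.1) (noLeft t.1 (kept_mem_KV hδ ht).1)
        · -- t = r
          have hte : t = r := eq_of_fst hδ htδ hrδ hc1
          subst hte
          -- show s = stackMult of t
          right
          rcases Nat.eq_or_lt_of_le hs with he2 | he2
          · omega
          · exfalso
            have hmem := stack_mem hδ htδ (show s + 1 ≤ stackMult n δ t by omega)
            have hqe : (t.1 - (s + 1), t.2 + (s + 1)) = q := by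
              apply eq_of_fst hδ hmem hqδ
              simp only []
              omega
            rw [← hqe] at hq
            exact stack_removed hδ ht (by omega) (by omega) hq
        · -- r.1 strictly inside left interval of t : contradiction
          exfalso
          have := (hit_left hδ ht hs (show t.1 - s ≤ r.1 by omega) (by omega)).2 r hr rfl
          omega
      · -- q.1+1 = t.2 + s : impossible
        exfalso
        have ht2 : t.2 ≤ q.1 := by
          have : q.1 ≠ t.2 := fst_ne_snd hδ hqδ htδ
          omega
        exact (hit_right hδ ht hs ht2 (by omega)).1 q hqδ rfl
  -- right analysis
  have hR : q.2 - 1 = r.2 ∨ q.2 - 1 = r.2 + stackMult n δ r := by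
    rcases Nat.eq_or_lt_of_le (show r.2 ≤ q.2 - 1 by omega) with he | hlt
    · exact Or.inl he.symm
    · have hkv : q.2 - 1 ∉ KeptVerts n δ := by
        intro hkv
        exact noRight _ hkv ⟨hlt, by omega⟩
      obtain ⟨t, ht, s, hs1, hs, hor⟩ := removed_char hδ harc (by omega) (by omega : q.2 - 1 ≤ n) hkv
      have htδ := (mem_kept_iff.1 ht).1
      have hμt := stackMult_lt_fst hδ htδ
      rcases hor with he' | he'
      · -- q.2 - 1 = t.1 - s : impossible
        exfalso
        have ht1 : q.2 ≤ t.1 := by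
          have : t.1 ≠ q.2 := fst_ne_snd hδ htδ hqδ
          omega
        exact (hit_left hδ ht hs (show t.1 - s ≤ q.2 by omega) (by omega)).1 q hqδ rfl
      · -- q.2 - 1 = t.2 + s
        have ht2 : t.2 < q.2 - 1 := by omega
        rcases lt_trichotomy r.2 t.2 with hc1 | hc1 | hc1
        · exact absurd (⟨hc1, by omega⟩ : r.2 < t.2 ∧ t.2 < q.2) (noRight t.2 (kept_mem_KV hδ ht).2)
        · -- t = r
          have hte : t = r := eq_of_snd hδ htδ hrδ hc1.symm
          subst hte
          right
          rcases Nat.eq_or_lt_of_le hs with he2 | he2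
          · omega
          · exfalso
            have hmem := stack_mem hδ htδ (show s + 1 ≤ stackMult n δ t by omega)
            have hqe : (t.1 - (s + 1), t.2 + (s + 1)) = q := by
              apply eq_of_snd hδ hmem hqδ
              simp only []
              omega
            rw [← hqe] at hq
            exact stack_removed hδ ht (by omega) (by omega) hq
        · -- r.2 strictly inside right interval of t : contradiction
          exfalso
          have := (hit_right hδ ht hs (show t.2 ≤ r.2 by omega) (by omega)).2 r hr rfl
          omega
  -- combine
  have hμmem := stack_mem hδ hrδ (le_refl (stackMult n δ r))
  rcases hL with hL | hL <;> rcases hR with hR | hR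
  · -- r = (q.1+1, q.2-1)
    apply (mem_kept_iff.1 hq).2
    have : (q.1 + 1, q.2 - 1) = r := by
      rw [Prod.ext_iff]
      constructor <;> simp only [] <;> omega
    rw [this]
    exact hrδ
  · -- r.1 = q.1 + 1, right deep : q.1 inside left interval of r
    have := (hit_left hδ hr (le_refl (stackMult n δ r))
      (show r.1 - stackMult n δ r ≤ q.1 by omega) (show q.1 ≤ r.1 by omega)).2 q hq rfl
    omega
  · -- left deep, r.2 = q.2 - 1 : q.2 inside right interval of r
    have := (hit_right hδ hr (le_refl (stackMult n δ r))
      (show r.2 ≤ q.2 by omega) (show q.2 ≤ r.2 + stackMult n δ r by omega)).2 q hq rfl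
    omega
  · -- both deep : outermost arc of r-stack is (q.1+1, q.2-1)
    apply (mem_kept_iff.1 hq).2
    have : (q.1 + 1, q.2 - 1) = (r.1 - stackMult n δ r, r.2 + stackMult n δ r) := by
      rw [Prod.ext_iff]
      constructor <;> simp only [] <;> omega
    rw [this]
    exact hμmem

lemma collapse_iso (hδ : IsDiagram n δ) (harc : ∀ p ∈ δ, p.1 + 3 ≤ p.2)
    {q : ℕ × ℕ} (hq : q ∈ Kept δ) (he : rankOf n δ q.2 = rankOf n δ q.1 + 2) :
    rankOf n δ q.1 + 1 ∉ IsolatedVerts ((KeptVerts n δ).card) (collapse n δ) := by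
  intro hiso
  simp only [IsolatedVerts, Finset.mem_filter, Finset.mem_Icc] at hiso
  obtain ⟨-, hisol⟩ := hiso
  have hqδ := (mem_kept_iff.1 hq).1
  have hqb := hδ.1 q hqδ
  have hkq := kept_mem_KV hδ hq
  obtain ⟨v, hv, hv1, hv2⟩ := exists_survivor hδ harc hq
  have hrv : rankOf n δ v = rankOf n δ q.1 + 1 := by
    have := rank_strict (δ := δ) hv hv1
    have := rank_strict (δ := δ) hkq.2 hv2
    omega
  -- v is isolated in δ
  have hvisol : ∀ p ∈ δ, v ≠ p.1 ∧ v ≠ p.2 := by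
    intro p hp
    constructor
    · intro hvp
      have hpk : p ∈ Kept δ := by
        simp only [KeptVerts, Finset.mem_filter] at hv
        exact hv.2 p hp (Or.inl hvp)
      have : (rankOf n δ p.1, rankOf n δ p.2) ∈ collapse n δ := mem_collapse.2 ⟨p, hpk, rfl⟩
      have := (hisol _ this).1
      rw [hvp] at hrv
      simp only at this
      omega
    · intro hvp
      have hpk : p ∈ Kept δ := by
        simp only [KeptVerts, Finset.mem_filter] at hv
        exact hv.2 p hp (Or.inr hvp)
      have : (rankOf n δ p.1, rankOf n δ p.2) ∈ collapse n δ := mem_collapse.2 ⟨p, hpk, rfl⟩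
      have := (hisol _ this).2
      rw [hvp] at hrv
      simp only at this
      omega
  -- pick a second vertex strictly between q.1 and q.2
  have harcq := harc q hqδ
  obtain ⟨w, hw1, hw2, hwv⟩ : ∃ w, q.1 < w ∧ w < q.2 ∧ w ≠ v := by
    rcases eq_or_ne v (q.1 + 1) with hve | hve
    · exact ⟨q.1 + 2, by omega, by omega, by omega⟩
    · exact ⟨q.1 + 1, by omega, by omega, fun hh => hve (by omega)⟩
  have hwkv : w ∉ KeptVerts n δ := by
    intro hwkv
    have h1 := rank_strict (δ := δ) hwkv hw1
    have h2 := rank_strict (δ := δ) hkq.2 hw2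
    have : rankOf n δ w = rankOf n δ v := by omega
    exact hwv (rank_inj hwkv hv this)
  obtain ⟨t, ht, s, hs1, hs, hor⟩ := removed_char hδ harc (by omega) (by omega : w ≤ n) hwkv
  have htδ := (mem_kept_iff.1 ht).1
  have hμt := stackMult_lt_fst hδ htδ
  rcases hor with he' | he'
  · -- w = t.1 - s
    rcases Nat.lt_or_ge t.1 q.2 with hc | hc
    · -- t.1 is a survivor strictly between, so t.1 = v, contradicting isolation
      have htv : t.1 = v := by
        have hkt := (kept_mem_KV hδ ht).1
        have h1 := rank_strict (δ := δ) hkt (show q.1 < t.1 by omega)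
        have h2 := rank_strict (δ := δ) hkq.2 hc
        exact rank_inj hkt hv (by omega)
      exact (hvisol t htδ).1 htv.symm
    · exact (hit_left hδ ht hs (show t.1 - s ≤ q.2 by omega) (by omega)).1 q hqδ rfl
  · -- w = t.2 + s
    rcases Nat.lt_or_ge q.1 t.2 with hc | hc
    · have htv : t.2 = v := by
        have hkt := (kept_mem_KV hδ ht).2
        have h1 := rank_strict (δ := δ) hkt hc
        have h2 := rank_strict (δ := δ) hkq.2 (show t.2 < q.2 by omega)
        exact rank_inj hkt hv (by omega)
      exact (hvisol t htδ).2 htv.symm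
    · exact (hit_right hδ ht hs hc (by omega)).1 q hqδ rfl

lemma multFun_rankpair (hδ : IsDiagram n δ) {q : ℕ × ℕ} (hq : q ∈ Kept δ) :
    multFun n δ (rankOf n δ q.1, rankOf n δ q.2) = stackMult n δ q := by
  unfold multFun
  have hfil : (Kept δ).filter
      (fun p => (rankOf n δ p.1, rankOf n δ p.2) = (rankOf n δ q.1, rankOf n δ q.2)) = {q} := by
    ext p
    simp only [Finset.mem_filter, Finset.mem_singleton]
    constructor
    · rintro ⟨hp, he⟩
      exact rankpair_injOn hδ hp hq he
    · rintro rfl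
      exact ⟨hq, rfl⟩
  rw [hfil, Finset.sum_singleton]

lemma multFun_zero {a : ℕ × ℕ} (ha : a ∉ collapse n δ) : multFun n δ a = 0 := by
  unfold multFun
  apply Finset.sum_eq_zero
  intro p hp
  simp only [Finset.mem_filter] at hp
  exact absurd (mem_collapse.2 ⟨p, hp.1, hp.2⟩) ha

lemma sum_multFun (hδ : IsDiagram n δ) :
    ∑ a ∈ collapse n δ, multFun n δ a = ∑ q ∈ Kept δ, stackMult n δ q := by
  unfold collapse
  rw [Finset.sum_image]
  · exact Finset.sum_congr rfl fun q hq => multFun_rankpair hδ hq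
  · intro q hq q' hq' he
    exact rankpair_injOn hδ hq hq' he

lemma phi_rank (hδ : IsDiagram n δ) (harc : ∀ p ∈ δ, p.1 + 3 ≤ p.2) {v : ℕ}
    (hv : v ∈ KeptVerts n δ) :
    phi (collapse n δ) (multFun n δ) (rankOf n δ v) = v := by
  classical
  have hvIcc : 1 ≤ v ∧ v ≤ n := by
    have := hv
    simp only [KeptVerts, Finset.mem_filter, Finset.mem_Icc] at this
    exact this.1
  unfold phi
  have hre : ∑ a ∈ collapse n δ, multFun n δ a *
      ((if a.1 ≤ rankOf n δ v then 1 else 0) + (if a.2 < rankOf n δ v then 1 else 0)) =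
      ∑ q ∈ Kept δ, stackMult n δ q * ((if q.1 ≤ v then 1 else 0) + (if q.2 < v then 1 else 0)) := by
    unfold collapse
    rw [Finset.sum_image (fun q hq q' hq' he => rankpair_injOn hδ hq hq' he)]
    refine Finset.sum_congr rfl fun q hq => ?_
    rw [multFun_rankpair hδ hq]
    have hk := kept_mem_KV hδ hq
    have hiff1 : rankOf n δ q.1 ≤ rankOf n δ v ↔ q.1 ≤ v := by
      constructor
      · intro h
        by_contra hc
        have := rank_strict (δ := δ) hk.1 (show v < q.1 by omega)
        omega
      · exact rank_mono
    have hiff2 : rankOf n δ q.2 < rankOf n δ v ↔ q.2 < v := by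
      constructor
      · exact rank_lt_reflect
      · exact rank_strict (δ := δ) hv
    rw [if_congr hiff1 rfl rfl, if_congr hiff2 rfl rfl]
  rw [hre]
  have hsplit := Finset.card_filter_add_card_filter_not
    (s := Finset.Icc 1 v) (p := fun x => x ∈ KeptVerts n δ)
  have hc1 : (Finset.Icc 1 v).filter (fun x => x ∈ KeptVerts n δ)
      = (KeptVerts n δ).filter (· ≤ v) := by
    ext x
    simp only [Finset.mem_filter, Finset.mem_Icc]
    constructor
    · rintro ⟨⟨h1, h2⟩, h3⟩
      exact ⟨h3, h2⟩
    · rintro ⟨h1, h2⟩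
      have hx := h1
      simp only [KeptVerts, Finset.mem_filter, Finset.mem_Icc] at hx
      exact ⟨⟨hx.1.1, (h2 : x ≤ v)⟩, h1⟩
  have hc2 : ((Finset.Icc 1 v).filter (fun x => ¬ x ∈ KeptVerts n δ)).card
      = ∑ q ∈ Kept δ, stackMult n δ q *
        ((if q.1 ≤ v then 1 else 0) + (if q.2 < v then 1 else 0)) := by
    have hEq : (Finset.Icc 1 v).filter (fun x => ¬ x ∈ KeptVerts n δ)
        = (Kept δ).biUnion (fun q =>
          ((((Finset.Icc 1 (stackMult n δ q)).image (fun s => q.1 - s)) ∪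
           ((Finset.Icc 1 (stackMult n δ q)).image (fun s => q.2 + s)))).filter (· ≤ v)) := by
      ext x
      simp only [Finset.mem_filter, Finset.mem_Icc, Finset.mem_biUnion, Finset.mem_union,
        Finset.mem_image]
      constructor
      · rintro ⟨⟨h1, h2⟩, h3⟩
        obtain ⟨q, hq, s, hs1, hs, hor⟩ := removed_char hδ harc h1 (by omega) h3
        rcases hor with rfl | rfl
        · exact ⟨q, hq, ⟨Or.inl ⟨s, ⟨hs1, hs⟩, rfl⟩, (h2 : q.1 - s ≤ v)⟩⟩
        · exact ⟨q, hq, ⟨Or.inr ⟨s, ⟨hs1, hs⟩, rfl⟩, (h2 : q.2 + s ≤ v)⟩⟩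
      · rintro ⟨q, hq, hor, hle⟩
        have hqδ := (mem_kept_iff.1 hq).1
        rcases hor with ⟨s, ⟨hs1, hs⟩, rfl⟩ | ⟨s, ⟨hs1, hs⟩, rfl⟩
        · have hb := hδ.1 _ (stack_mem hδ hqδ hs)
          exact ⟨⟨hb.1, hle⟩, (removed_not_KV hδ hq hs1 hs).1⟩
        · have hb := hδ.1 _ (stack_mem hδ hqδ hs)
          exact ⟨⟨by omega, hle⟩, (removed_not_KV hδ hq hs1 hs).2⟩
    rw [hEq, Finset.card_biUnion]
    · refine Finset.sum_congr rfl fun q hq => ?_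
      have hqδ := (mem_kept_iff.1 hq).1
      have hμ := stackMult_lt_fst hδ hqδ
      rw [Finset.filter_union, Finset.card_union_of_disjoint]
      · have hcL : (((Finset.Icc 1 (stackMult n δ q)).image (fun s => q.1 - s)).filter (· ≤ v)).card
            = if q.1 ≤ v then stackMult n δ q else 0 := by
          split_ifs with hcase
          · rw [Finset.filter_true_of_mem, Finset.card_image_of_injOn, Nat.card_Icc]
            · omega
            · intro a ha c hc hac
              simp only [Finset.coe_Icc, Set.mem_Icc] at ha hc
              have hac' : q.1 - a = q.1 - c := hac
              omega
            · intro x hx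
              simp only [Finset.mem_image, Finset.mem_Icc] at hx
              obtain ⟨s, ⟨hs1, hs⟩, rfl⟩ := hx
              exact (by omega : q.1 - s ≤ v)
          · rw [Finset.card_eq_zero.2]
            rw [Finset.filter_eq_empty_iff]
            intro x hx
            simp only [Finset.mem_image, Finset.mem_Icc] at hx
            obtain ⟨s, ⟨hs1, hs⟩, rfl⟩ := hx
            intro hxv
            have hxv' : q.1 - s ≤ v := hxv
            have hrem := (removed_not_KV hδ hq (show 1 ≤ q.1 - v by omega)
              (show q.1 - v ≤ stackMult n δ q by omega)).1
            have : q.1 - (q.1 - v) = v := by omega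
            rw [this] at hrem
            exact hrem hv
        have hcR : (((Finset.Icc 1 (stackMult n δ q)).image (fun s => q.2 + s)).filter (· ≤ v)).card
            = if q.2 < v then stackMult n δ q else 0 := by
          split_ifs with hcase
          · rw [Finset.filter_true_of_mem, Finset.card_image_of_injOn, Nat.card_Icc]
            · omega
            · intro a ha c hc hac
              simp only [Finset.coe_Icc, Set.mem_Icc] at ha hc
              have hac' : q.2 + a = q.2 + c := hac
              omega
            · intro x hx
              simp only [Finset.mem_image, Finset.mem_Icc] at hx
              obtain ⟨s, ⟨hs1, hs⟩, rfl⟩ := hx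
              show q.2 + s ≤ v
              by_contra hc
              have hrem := (removed_not_KV hδ hq (show 1 ≤ v - q.2 by omega)
                (show v - q.2 ≤ stackMult n δ q by omega)).2
              have : q.2 + (v - q.2) = v := by omega
              rw [this] at hrem
              exact hrem hv
          · rw [Finset.card_eq_zero.2]
            rw [Finset.filter_eq_empty_iff]
            intro x hx
            simp only [Finset.mem_image, Finset.mem_Icc] at hx
            obtain ⟨s, ⟨hs1, hs⟩, rfl⟩ := hx
            intro hxv
            have : q.2 + s ≤ v := hxv
            omega
        rw [hcL, hcR]
        split_ifs <;> ring
      · exact Finset.disjoint_filter_filter (by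
          rw [Finset.disjoint_left]
          intro x hx hx'
          simp only [Finset.mem_image, Finset.mem_Icc] at hx hx'
          obtain ⟨s, ⟨hs1, hs⟩, rfl⟩ := hx
          obtain ⟨s', ⟨hs1', hs'⟩, he⟩ := hx'
          have h1 := stack_mem hδ hqδ hs
          have h2 := stack_mem hδ hqδ hs'
          exact fst_ne_snd hδ h1 h2 he.symm)
    · intro q hq q' hq' hne
      exact Finset.disjoint_filter_filter (remSet_pairwise_disjoint hδ hq hq' hne)
  rw [hc1] at hsplit
  rw [hc2] at hsplit
  rw [Nat.card_Icc] at hsplit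
  unfold rankOf
  omega

lemma left_inverse (hδ : IsDiagram n δ) (harc : ∀ p ∈ δ, p.1 + 3 ≤ p.2) :
    expandF (collapse n δ) (multFun n δ) = δ := by
  ext x
  rw [mem_expandF]
  constructor
  · rintro ⟨a, ha, s, hs, rfl⟩
    obtain ⟨q, hq, rfl⟩ := mem_collapse.1 ha
    have hk := kept_mem_KV hδ hq
    rw [multFun_rankpair hδ hq] at hs
    simp only []
    rw [phi_rank hδ harc hk.1, phi_rank hδ harc hk.2]
    exact stack_mem hδ (mem_kept_iff.1 hq).1 hs
  · intro hx
    obtain ⟨q, hq, s, hs, rfl⟩ := descent hδ harc x hx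
    have hk := kept_mem_KV hδ hq
    refine ⟨(rankOf n δ q.1, rankOf n δ q.2), mem_collapse.2 ⟨q, hq, rfl⟩, s, ?_, ?_⟩
    · rw [multFun_rankpair hδ hq]
      exact hs
    · simp only []
      rw [phi_rank hδ harc hk.1, phi_rank hδ harc hk.2]

end DSide

section Assemble

variable {k σ n h : ℕ}

lemma ctx_of_mem {b : ℕ} {M : Finset (ℕ × ℕ)} {m : ℕ × ℕ → ℕ}
    (hσ : 2 ≤ σ) (hh : 1 ≤ h) (hb1 : σ - 1 ≤ b) (hb2 : b ≤ h - 1)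
    (hcore : IsCoreStar k (n - 2 * b) (h - b) M)
    (hm0 : ∀ a ∉ M, m a = 0) (hmσ : ∀ a ∈ M, σ - 1 ≤ m a)
    (hsum : ∑ a ∈ M, m a = b) :
    Ctx σ (n - 2 * b) b M m ∧ n = (n - 2 * b) + 2 * b := by
  obtain ⟨hM, hMC, hcard, harc2, hpar, hiso⟩ := hcore
  refine ⟨⟨hM, hσ, harc2, hpar, hiso, hm0, hmσ, hsum⟩, ?_⟩
  have hMne : M.Nonempty := by
    rw [← Finset.card_pos, hcard]
    omega
  obtain ⟨p, hp⟩ := hMne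
  have hb := hM.1 p hp
  have h2 := harc2 p hp
  omega

theorem main (hk : 2 ≤ k) (hσ : 2 ≤ σ) (hn : 1 ≤ n) (hh : 1 ≤ h) :
    Set.BijOn (fun δ => (collapse n δ, multFun n δ))
      {δ : Finset (ℕ × ℕ) | IsDiagram n δ ∧ ¬ MutuallyCrossing k δ ∧ δ.card = h ∧
        (∀ p ∈ δ, p.1 + 3 ≤ p.2) ∧
        ∀ p ∈ δ, ∃ q : ℕ × ℕ, (∀ t < σ, (q.1 + t, q.2 - t) ∈ δ) ∧
          ∃ t < σ, p = (q.1 + t, q.2 - t)}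
      {q : Finset (ℕ × ℕ) × (ℕ × ℕ → ℕ) | ∃ b : ℕ, σ - 1 ≤ b ∧ b ≤ h - 1 ∧
        IsCoreStar k (n - 2 * b) (h - b) q.1 ∧
        (∀ a, a ∉ q.1 → q.2 a = 0) ∧ (∀ a ∈ q.1, σ - 1 ≤ q.2 a) ∧
        ∑ a ∈ q.1, q.2 a = b} := by
  apply Set.InvOn.bijOn (f' := fun q : Finset (ℕ × ℕ) × (ℕ × ℕ → ℕ) => expandF q.1 q.2)
  · constructor
    · -- left inverse
      intro δ hδmem
      obtain ⟨hδ, hMC, hcard, harc, hstack⟩ := hδmem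
      exact left_inverse hδ harc
    · -- right inverse
      rintro ⟨M, m⟩ ⟨b, hb1, hb2, hcore, hm0, hmσ, hsum⟩
      obtain ⟨C, hneq⟩ := ctx_of_mem hσ hh hb1 hb2 hcore hm0 hmσ hsum
      simp only
      rw [Prod.ext_iff]
      exact ⟨expand_collapse C hneq, expand_multFun C hneq⟩
  · -- MapsTo forward
    intro δ hδmem
    obtain ⟨hδ, hMC, hcard, harc, hstack⟩ := hδmem
    have hσm : ∀ r ∈ Kept δ, σ - 1 ≤ stackMult n δ r := fun r hr => kept_sigma hδ hσ hstack hr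
    have hKne : (Kept δ).Nonempty := by
      have : δ.Nonempty := by rw [← Finset.card_pos, hcard]; omega
      obtain ⟨p, hp⟩ := this
      obtain ⟨q, hq, -⟩ := descent hδ harc p hp
      exact ⟨q, hq⟩
    obtain ⟨q0, hq0⟩ := hKne
    set b := ∑ q ∈ Kept δ, stackMult n δ q with hbdef
    have hcd := card_delta hδ harc
    have hKpos : 1 ≤ (Kept δ).card := Finset.card_pos.2 ⟨q0, hq0⟩
    have hbσ : σ - 1 ≤ b := by
      have h1 := hσm q0 hq0
      have h2 : stackMult n δ q0 ≤ b :=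
        Finset.single_le_sum (fun i _ => Nat.zero_le _) hq0
      omega
    have hbh : b ≤ h - 1 := by omega
    have hKV := KV_card hδ harc
    have hKVcard : (KeptVerts n δ).card = n - 2 * b := by omega
    refine ⟨b, hbσ, hbh, ?_, ?_, ?_, ?_⟩
    · refine ⟨?_, ?_, ?_, ?_, ?_, ?_⟩
      · rw [← hKVcard]
        exact collapse_isDiagram hδ harc
      · exact collapse_notMC hδ hMC
      · rw [collapse_card hδ]
        omega
      · intro a ha
        obtain ⟨q, hq, rfl⟩ := mem_collapse.1 ha
        exact collapse_arclen hδ harc hq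
      · intro a ha
        obtain ⟨q, hq, rfl⟩ := mem_collapse.1 ha
        exact collapse_noparallel hδ harc (fun r hr => by have := hσm r hr; omega) hq
      · intro a ha he2
        obtain ⟨q, hq, rfl⟩ := mem_collapse.1 ha
        rw [← hKVcard]
        exact collapse_iso hδ harc hq (by simpa using he2)
    · intro a ha
      exact multFun_zero ha
    · intro a ha
      obtain ⟨q, hq, rfl⟩ := mem_collapse.1 ha
      show σ - 1 ≤ multFun n δ _
      rw [multFun_rankpair hδ hq]
      exact hσm q hq
    · show ∑ a ∈ collapse n δ, multFun n δ a = b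
      rw [sum_multFun hδ]
  · -- MapsTo backward
    rintro ⟨M, m⟩ ⟨b, hb1, hb2, hcore, hm0, hmσ, hsum⟩
    obtain ⟨C, hneq⟩ := ctx_of_mem hσ hh hb1 hb2 hcore hm0 hmσ hsum
    have hMC := hcore.2.1
    have hcard := hcore.2.2.1
    simp only [Set.mem_setOf_eq]
    refine ⟨?_, ?_, ?_, ?_, ?_⟩
    · have := expand_isDiagram C.hM C.hsum
      rwa [← hneq] at this
    · exact expand_notMC C hMC
    · rw [expand_card C.hM C.hsum, hcard]
      omega
    · exact expand_arclen C
    · exact expand_stack C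

end Assemble

end S14

/-- The map `δ ↦ (c(δ), (a_t)_t)` — collapsing each maximal stack to a single
arc and recording, for each arc of the core, the number of arcs removed from
its stack — is a bijection from the set of `k`-noncrossing structures on `[n]`
with `h` arcs, arc-length ≥ 3 and stack-length ≥ σ, onto the disjoint union
over `σ-1 ≤ b ≤ h-1` of `C*_k(n-2b, h-b) × {(a_t) : ∑ a_t = b, a_t ≥ σ-1}`. -/
theorem stmt14 (k σ n h : ℕ) (hk : 2 ≤ k) (hσ : 2 ≤ σ) (hn : 1 ≤ n) (hh : 1 ≤ h) :
    Set.BijOn (fun δ => (collapse n δ, multFun n δ))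
      {δ : Finset (ℕ × ℕ) | IsDiagram n δ ∧ ¬ MutuallyCrossing k δ ∧ δ.card = h ∧
        (∀ p ∈ δ, p.1 + 3 ≤ p.2) ∧
        ∀ p ∈ δ, ∃ q : ℕ × ℕ, (∀ t < σ, (q.1 + t, q.2 - t) ∈ δ) ∧
          ∃ t < σ, p = (q.1 + t, q.2 - t)}
      {q : Finset (ℕ × ℕ) × (ℕ × ℕ → ℕ) | ∃ b : ℕ, σ - 1 ≤ b ∧ b ≤ h - 1 ∧
        IsCoreStar k (n - 2 * b) (h - b) q.1 ∧
        (∀ a, a ∉ q.1 → q.2 a = 0) ∧ (∀ a ∈ q.1, σ - 1 ≤ q.2 a) ∧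
        ∑ a ∈ q.1, q.2 a = b} :=
  S14.main hk hσ hn hh
end

section
/- As formal power series in z: ∑_{n ≥ 0} ∑_{h ≤ n/2} T_{2,1}(n,h) z^n = (1/(z² - z + 1)) ∑_{n ≥ 0} Cat(n) (z/(z² - z + 1))^{2n}, where T_{2,1}(n,h) is the number of RNA secondary structures on [n] with h arcs and Cat(n) is the n-th Catalan number (which equals f_2(2n, 0), the number of noncrossing perfect matchings on [2n]). -/
open Finset

/-- `T_{2,1}(n,h)`: the number of RNA secondary structures on `[n]` (partial
matchings with no two crossing arcs and all arcs of length ≥ 2) with `h` arcs. -/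
noncomputable def T21 (n h : ℕ) : ℕ :=
  {M : Finset (ℕ × ℕ) | IsDiagram n M ∧ ¬ MutuallyCrossing 2 M ∧
    (∀ p ∈ M, p.1 + 2 ≤ p.2) ∧ M.card = h}.ncard

namespace RNAAux

/-- Noncrossing condition, elementwise. -/
def Noncross (M : Finset (ℕ × ℕ)) : Prop :=
  ∀ p ∈ M, ∀ q ∈ M, ¬(p.1 < q.1 ∧ q.1 < p.2 ∧ p.2 < q.2)

lemma not_mc2 {M : Finset (ℕ × ℕ)} : ¬ MutuallyCrossing 2 M ↔ Noncross M := by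
  constructor
  · intro h p hp q hq hc
    obtain ⟨hc1, hc2, hc3⟩ := hc
    apply h
    refine ⟨![p, q], ?_, ?_, ?_, ?_⟩
    · intro t; fin_cases t <;> simpa
    · intro a b hab
      fin_cases a <;> fin_cases b <;> simp_all <;> omega
    · intro a b hab
      fin_cases a <;> fin_cases b <;> simp_all <;> omega
    · intro s t
      fin_cases s <;> fin_cases t <;> simp <;> omega
  · rintro h ⟨f, hfM, h1, h2, h3⟩
    have h01 : (0 : Fin 2) < 1 := by decide
    exact h (f 0) (hfM 0) (f 1) (hfM 1) ⟨h1 h01, h3 1 0, h2 h01⟩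

lemma diagram_subset {n : ℕ} {M : Finset (ℕ × ℕ)} (h : IsDiagram n M) :
    M ⊆ Finset.Icc 1 n ×ˢ Finset.Icc 1 n := by
  intro p hp
  obtain ⟨h1, h2, h3⟩ := h.1 p hp
  simp only [Finset.mem_product, Finset.mem_Icc]
  omega

/-- The finset of RNA secondary structures on `[n]`. -/
noncomputable def SSF (n : ℕ) : Finset (Finset (ℕ × ℕ)) :=
  @Finset.filter _
    (fun M => IsDiagram n M ∧ ¬ MutuallyCrossing 2 M ∧ ∀ p ∈ M, p.1 + 2 ≤ p.2)
    (Classical.decPred _) ((Finset.Icc 1 n ×ˢ Finset.Icc 1 n).powerset)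

lemma mem_SSF {n : ℕ} {M : Finset (ℕ × ℕ)} :
    M ∈ SSF n ↔ IsDiagram n M ∧ Noncross M ∧ ∀ p ∈ M, p.1 + 2 ≤ p.2 := by
  rw [SSF, @Finset.mem_filter _ _ (Classical.decPred _) _ _]
  constructor
  · rintro ⟨-, hd, hnc, hl⟩; exact ⟨hd, not_mc2.mp hnc, hl⟩
  · rintro ⟨hd, hnc, hl⟩
    exact ⟨Finset.mem_powerset.mpr (diagram_subset hd), hd, not_mc2.mpr hnc, hl⟩

lemma card_le_half {n : ℕ} {M : Finset (ℕ × ℕ)} (hd : IsDiagram n M) :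
    M.card ≤ n / 2 := by
  classical
  have hdisj : ∀ p ∈ M, ∀ q ∈ M, p ≠ q →
      Disjoint ({p.1, p.2} : Finset ℕ) {q.1, q.2} := by
    intro p hp q hq hne
    obtain ⟨e1, e2, e3, e4⟩ := hd.2 p hp q hq hne
    simp only [Finset.disjoint_left, Finset.mem_insert, Finset.mem_singleton]
    rintro a (rfl | rfl) h <;> rcases h with h | h <;> omega
  have hcardU : (M.biUnion fun p => ({p.1, p.2} : Finset ℕ)).card
      = ∑ p ∈ M, ({p.1, p.2} : Finset ℕ).card := Finset.card_biUnion hdisj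
  have hsum : ∑ p ∈ M, ({p.1, p.2} : Finset ℕ).card = 2 * M.card := by
    rw [Finset.sum_congr rfl (fun p hp => ?_), Finset.sum_const, smul_eq_mul, mul_comm]
    have h2 := (hd.1 p hp).2.1
    rw [Finset.card_insert_of_notMem (by simp; omega), Finset.card_singleton]
  have hsub : (M.biUnion fun p => ({p.1, p.2} : Finset ℕ)) ⊆ Finset.Icc 1 n := by
    intro a ha
    rw [Finset.mem_biUnion] at ha
    obtain ⟨p, hp, hap⟩ := ha
    obtain ⟨h1, h2, h3⟩ := hd.1 p hp
    simp only [Finset.mem_insert, Finset.mem_singleton] at hap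
    rw [Finset.mem_Icc]; omega
  have hle := Finset.card_le_card hsub
  rw [hcardU, hsum, Nat.card_Icc] at hle
  omega

lemma sum_T21 (n : ℕ) : (∑ h ∈ range (n / 2 + 1), T21 n h) = (SSF n).card := by
  classical
  have hT : ∀ h, T21 n h = ((SSF n).filter (fun M => M.card = h)).card := by
    intro h
    rw [T21]
    have hset : {M : Finset (ℕ × ℕ) | IsDiagram n M ∧ ¬ MutuallyCrossing 2 M ∧
        (∀ p ∈ M, p.1 + 2 ≤ p.2) ∧ M.card = h}
        = ↑((SSF n).filter (fun M => M.card = h)) := by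
      ext M
      simp only [Set.mem_setOf_eq, Finset.mem_coe, Finset.mem_filter, mem_SSF]
      constructor
      · rintro ⟨hd, hnc, hl, hc⟩; exact ⟨⟨hd, not_mc2.mp hnc, hl⟩, hc⟩
      · rintro ⟨⟨hd, hnc, hl⟩, hc⟩; exact ⟨hd, not_mc2.mpr hnc, hl, hc⟩
    rw [hset, Set.ncard_coe_finset]
  simp_rw [hT]
  refine (Finset.card_eq_sum_card_fiberwise ?_).symm
  intro M hM
  rw [Finset.mem_coe, Finset.mem_range]
  have := card_le_half (mem_SSF.mp hM).1
  omega

lemma SSF_of_le_one {n : ℕ} (hn : n ≤ 1) : SSF n = {∅} := by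
  ext M
  rw [mem_SSF, Finset.mem_singleton]
  constructor
  · rintro ⟨⟨hb, -⟩, -, -⟩
    rw [Finset.eq_empty_iff_forall_notMem]
    intro p hp
    obtain ⟨h1, h2, h3⟩ := hb p hp
    omega
  · rintro rfl
    refine ⟨⟨?_, ?_⟩, ?_, ?_⟩
    · intro p hp; simp at hp
    · intro p hp; simp at hp
    · intro p hp; simp at hp
    · intro p hp; simp at hp

lemma t0 : (SSF 0).card = 1 := by
  rw [SSF_of_le_one (by norm_num)]; simp

lemma t1 : (SSF 1).card = 1 := by
  rw [SSF_of_le_one (by norm_num)]; simp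

lemma gval_of_mem {n k : ℕ} {M : Finset (ℕ × ℕ)} (hM : IsDiagram (n + 2) M)
    (h : (k, n + 2) ∈ M) :
    (∑ p ∈ M.filter (fun p => p.2 = n + 2), p.1) = k := by
  have hfil : M.filter (fun p => p.2 = n + 2) = {(k, n + 2)} := by
    ext q
    simp only [Finset.mem_filter, Finset.mem_singleton]
    constructor
    · rintro ⟨hq, hq2⟩
      by_contra hne
      exact (hM.2 q hq (k, n + 2) h hne).2.2.2 hq2
    · rintro rfl; exact ⟨h, rfl⟩
  rw [hfil, Finset.sum_singleton]

lemma fiber_card (n k : ℕ) (hk1 : 1 ≤ k) (hk2 : k ≤ n) :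
    ((SSF (n + 2)).filter (fun M => (k, n + 2) ∈ M)).card
      = (SSF (k - 1)).card * (SSF (n + 1 - k)).card := by
  classical
  rw [← Finset.card_product]
  refine Finset.card_nbij'
    (i := fun M => (M.filter (fun p => p.2 < k),
      (M.filter (fun p => k < p.1 ∧ p.2 < n + 2)).image (fun p => (p.1 - k, p.2 - k))))
    (j := fun AB => insert (k, n + 2) (AB.1 ∪ AB.2.image (fun p => (p.1 + k, p.2 + k))))
    ?_ ?_ ?_ ?_
  · -- forward map lands in the product
    intro M hM
    rw [Finset.mem_coe, Finset.mem_filter] at hM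
    obtain ⟨hMS, hkM⟩ := hM
    rw [mem_SSF] at hMS
    obtain ⟨⟨hb, hdeg⟩, hnc, hl⟩ := hMS
    rw [Finset.mem_coe, Finset.mem_product]
    constructor
    · rw [mem_SSF]
      refine ⟨⟨?_, ?_⟩, ?_, ?_⟩
      · intro p hp
        rw [Finset.mem_filter] at hp
        obtain ⟨hpM, hp2⟩ := hp
        obtain ⟨u1, u2, u3⟩ := hb p hpM
        omega
      · intro p hp q hq hne
        exact hdeg p (Finset.mem_filter.mp hp).1 q (Finset.mem_filter.mp hq).1 hne
      · intro p hp q hq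
        exact hnc p (Finset.mem_filter.mp hp).1 q (Finset.mem_filter.mp hq).1
      · intro p hp
        exact hl p (Finset.mem_filter.mp hp).1
    · rw [mem_SSF]
      refine ⟨⟨?_, ?_⟩, ?_, ?_⟩
      · intro p hp
        rw [Finset.mem_image] at hp
        obtain ⟨q, hq, rfl⟩ := hp
        rw [Finset.mem_filter] at hq
        obtain ⟨hqM, hq1, hq2⟩ := hq
        obtain ⟨u1, u2, u3⟩ := hb q hqM
        simp only
        omega
      · intro p hp q hq hne
        rw [Finset.mem_image] at hp hq
        obtain ⟨a, ha, rfl⟩ := hp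
        obtain ⟨b, hbm, rfl⟩ := hq
        rw [Finset.mem_filter] at ha hbm
        have hab : a ≠ b := by rintro rfl; exact hne rfl
        obtain ⟨e1, e2, e3, e4⟩ := hdeg a ha.1 b hbm.1 hab
        obtain ⟨u1, u2, u3⟩ := hb a ha.1
        obtain ⟨v1, v2, v3⟩ := hb b hbm.1
        obtain ⟨ha1, ha2⟩ := ha.2
        obtain ⟨hb1, hb2⟩ := hbm.2
        simp only [ne_eq]
        omega
      · intro p hp q hq hc
        rw [Finset.mem_image] at hp hq
        obtain ⟨a, ha, rfl⟩ := hp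
        obtain ⟨b, hbm, rfl⟩ := hq
        rw [Finset.mem_filter] at ha hbm
        obtain ⟨hc1, hc2, hc3⟩ := hc
        obtain ⟨u1, u2, u3⟩ := hb a ha.1
        obtain ⟨v1, v2, v3⟩ := hb b hbm.1
        obtain ⟨ha1, ha2⟩ := ha.2
        obtain ⟨hb1, hb2⟩ := hbm.2
        simp only at hc1 hc2 hc3
        exact hnc a ha.1 b hbm.1 ⟨by omega, by omega, by omega⟩
      · intro p hp
        rw [Finset.mem_image] at hp
        obtain ⟨a, ha, rfl⟩ := hp
        rw [Finset.mem_filter] at ha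
        have hla := hl a ha.1
        obtain ⟨ha1, ha2⟩ := ha.2
        simp only
        omega
  · -- backward map lands in the fiber
    rintro ⟨A, B⟩ hAB
    rw [Finset.mem_coe, Finset.mem_product] at hAB
    obtain ⟨hA, hB⟩ := hAB
    rw [mem_SSF] at hA hB
    obtain ⟨⟨hAb, hAdeg⟩, hAnc, hAl⟩ := hA
    obtain ⟨⟨hBb, hBdeg⟩, hBnc, hBl⟩ := hB
    have hmem : ∀ q ∈ insert (k, n + 2) (A ∪ B.image (fun p => (p.1 + k, p.2 + k))),
        q = (k, n + 2) ∨ q ∈ A ∨ ∃ b ∈ B, (b.1 + k, b.2 + k) = q := by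
      intro q hq
      simp only [Finset.mem_insert, Finset.mem_union, Finset.mem_image] at hq
      tauto
    rw [Finset.mem_coe, Finset.mem_filter]
    refine ⟨?_, Finset.mem_insert_self _ _⟩
    rw [mem_SSF]
    refine ⟨⟨?_, ?_⟩, ?_, ?_⟩
    · intro p hp
      rcases hmem p hp with rfl | hp' | ⟨b, hbB, rfl⟩
      · simp only; omega
      · obtain ⟨u1, u2, u3⟩ := hAb p hp'
        omega
      · obtain ⟨u1, u2, u3⟩ := hBb b hbB
        simp only
        omega
    · intro p hp q hq hne
      rcases hmem p hp with rfl | hp' | ⟨a, haB, rfl⟩ <;>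
        rcases hmem q hq with rfl | hq' | ⟨b, hbB, rfl⟩
      · exact absurd rfl hne
      · obtain ⟨u1, u2, u3⟩ := hAb q hq'
        simp only [ne_eq]; omega
      · obtain ⟨u1, u2, u3⟩ := hBb b hbB
        simp only [ne_eq]; omega
      · obtain ⟨u1, u2, u3⟩ := hAb p hp'
        simp only [ne_eq]; omega
      · exact hAdeg p hp' q hq' hne
      · obtain ⟨u1, u2, u3⟩ := hAb p hp'
        obtain ⟨v1, v2, v3⟩ := hBb b hbB
        simp only [ne_eq]; omega
      · obtain ⟨u1, u2, u3⟩ := hBb a haB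
        simp only [ne_eq]; omega
      · obtain ⟨u1, u2, u3⟩ := hBb a haB
        obtain ⟨v1, v2, v3⟩ := hAb q hq'
        simp only [ne_eq]; omega
      · have hab : a ≠ b := by rintro rfl; exact hne rfl
        obtain ⟨e1, e2, e3, e4⟩ := hBdeg a haB b hbB hab
        simp only [ne_eq]; omega
    · intro p hp q hq hc
      obtain ⟨hc1, hc2, hc3⟩ := hc
      rcases hmem p hp with rfl | hp' | ⟨a, haB, rfl⟩ <;>
        rcases hmem q hq with rfl | hq' | ⟨b, hbB, rfl⟩
      · simp only at hc1 hc2 hc3; omega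
      · obtain ⟨u1, u2, u3⟩ := hAb q hq'
        simp only at hc1 hc2 hc3; omega
      · obtain ⟨u1, u2, u3⟩ := hBb b hbB
        simp only at hc1 hc2 hc3; omega
      · obtain ⟨u1, u2, u3⟩ := hAb p hp'
        simp only at hc1 hc2 hc3; omega
      · exact hAnc p hp' q hq' ⟨hc1, hc2, hc3⟩
      · obtain ⟨u1, u2, u3⟩ := hAb p hp'
        obtain ⟨v1, v2, v3⟩ := hBb b hbB
        simp only at hc1 hc2 hc3; omega
      · obtain ⟨u1, u2, u3⟩ := hBb a haB
        simp only at hc1 hc2 hc3; omega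
      · obtain ⟨u1, u2, u3⟩ := hBb a haB
        obtain ⟨v1, v2, v3⟩ := hAb q hq'
        simp only at hc1 hc2 hc3; omega
      · obtain ⟨u1, u2, u3⟩ := hBb a haB
        obtain ⟨v1, v2, v3⟩ := hBb b hbB
        simp only at hc1 hc2 hc3
        exact hBnc a haB b hbB ⟨by omega, by omega, by omega⟩
    · intro p hp
      rcases hmem p hp with rfl | hp' | ⟨b, hbB, rfl⟩
      · simp only; omega
      · exact hAl p hp'
      · have := hBl b hbB
        simp only
        omega
  · -- left inverse
    intro M hM
    rw [Finset.mem_coe, Finset.mem_filter] at hM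
    obtain ⟨hMS, hkM⟩ := hM
    rw [mem_SSF] at hMS
    obtain ⟨⟨hb, hdeg⟩, hnc, hl⟩ := hMS
    simp only
    have him : ((M.filter (fun p => k < p.1 ∧ p.2 < n + 2)).image
          (fun p => (p.1 - k, p.2 - k))).image (fun p => (p.1 + k, p.2 + k))
        = M.filter (fun p => k < p.1 ∧ p.2 < n + 2) := by
      rw [Finset.image_image]
      refine Eq.trans (Finset.image_congr ?_) Finset.image_id
      intro p hp
      rw [Finset.mem_coe, Finset.mem_filter] at hp
      obtain ⟨hpM, hp1, hp2⟩ := hp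
      obtain ⟨u1, u2, u3⟩ := hb p hpM
      obtain ⟨x, y⟩ := p
      simp only [Function.comp_apply, id_eq, Prod.mk.injEq] at *
      omega
    rw [him]
    ext q
    simp only [Finset.mem_insert, Finset.mem_union, Finset.mem_filter]
    constructor
    · rintro (rfl | ⟨hq, -⟩ | ⟨hq, -⟩)
      · exact hkM
      · exact hq
      · exact hq
    · intro hq
      by_cases hq' : q = (k, n + 2)
      · left; exact hq'
      · right
        obtain ⟨e1, e2, e3, e4⟩ := hdeg q hq (k, n + 2) hkM hq'
        obtain ⟨u1, u2, u3⟩ := hb q hq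
        by_cases h1 : q.1 < k
        · left
          refine ⟨hq, ?_⟩
          by_contra h2
          exact hnc q hq (k, n + 2) hkM ⟨h1, by omega, by omega⟩
        · right
          exact ⟨hq, by omega, by omega⟩
  · -- right inverse
    rintro ⟨A, B⟩ hAB
    rw [Finset.mem_coe, Finset.mem_product] at hAB
    obtain ⟨hA, hB⟩ := hAB
    rw [mem_SSF] at hA hB
    obtain ⟨⟨hAb, hAdeg⟩, hAnc, hAl⟩ := hA
    obtain ⟨⟨hBb, hBdeg⟩, hBnc, hBl⟩ := hB
    simp only [Prod.mk.injEq]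
    constructor
    · ext q
      simp only [Finset.mem_filter, Finset.mem_insert, Finset.mem_union, Finset.mem_image]
      constructor
      · rintro ⟨rfl | hq | ⟨b, hbB, rfl⟩, h2⟩
        · simp only at h2; omega
        · exact hq
        · obtain ⟨u1, u2, u3⟩ := hBb b hbB
          simp only at h2
          omega
      · intro hq
        obtain ⟨u1, u2, u3⟩ := hAb q hq
        exact ⟨Or.inr (Or.inl hq), by omega⟩
    · have hfil : (insert (k, n + 2) (A ∪ B.image (fun p => (p.1 + k, p.2 + k)))).filter
          (fun p => k < p.1 ∧ p.2 < n + 2)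
          = B.image (fun p => (p.1 + k, p.2 + k)) := by
        ext q
        simp only [Finset.mem_filter, Finset.mem_insert, Finset.mem_union, Finset.mem_image]
        constructor
        · rintro ⟨rfl | hq | hq, h2, h3⟩
          · simp only at h3; omega
          · obtain ⟨u1, u2, u3⟩ := hAb q hq
            omega
          · exact hq
        · rintro ⟨b, hbB, rfl⟩
          obtain ⟨u1, u2, u3⟩ := hBb b hbB
          exact ⟨Or.inr (Or.inr ⟨b, hbB, rfl⟩), by simp only; omega, by simp only; omega⟩
      rw [hfil, Finset.image_image]
      refine Eq.trans (Finset.image_congr ?_) Finset.image_id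
      intro p hp
      obtain ⟨x, y⟩ := p
      simp only [Function.comp_apply, id_eq, Prod.mk.injEq]
      omega

lemma t_rec (n : ℕ) :
    (SSF (n + 2)).card
      = (SSF (n + 1)).card + ∑ k ∈ Icc 1 n, (SSF (k - 1)).card * (SSF (n + 1 - k)).card := by
  classical
  have hmaps : ∀ M ∈ SSF (n + 2),
      (∑ p ∈ M.filter (fun p => p.2 = n + 2), p.1) ∈ range (n + 1) := by
    intro M hM
    rw [mem_SSF] at hM
    obtain ⟨⟨hb, hdeg⟩, hnc, hl⟩ := hM
    rw [Finset.mem_range]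
    by_cases hex : ∃ p ∈ M, p.2 = n + 2
    · obtain ⟨p, hp, hp2⟩ := hex
      have hpm : (p.1, n + 2) ∈ M := by rwa [← hp2, Prod.mk.eta]
      rw [gval_of_mem ⟨hb, hdeg⟩ hpm]
      have := hl p hp
      omega
    · push_neg at hex
      have hemp : M.filter (fun p => p.2 = n + 2) = ∅ :=
        Finset.filter_eq_empty_iff.mpr (fun p hp => hex p hp)
      rw [hemp, Finset.sum_empty]
      omega
  have hcard := Finset.card_eq_sum_card_fiberwise hmaps
  have hfib0 : (SSF (n + 2)).filter
      (fun M => (∑ p ∈ M.filter (fun p => p.2 = n + 2), p.1) = 0) = SSF (n + 1) := by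
    ext M
    simp only [Finset.mem_filter]
    constructor
    · rintro ⟨hM, hg⟩
      rw [mem_SSF] at hM ⊢
      obtain ⟨⟨hb, hdeg⟩, hnc, hl⟩ := hM
      have hno : ∀ p ∈ M, p.2 ≠ n + 2 := by
        intro p hp hp2
        have hpm : (p.1, n + 2) ∈ M := by rwa [← hp2, Prod.mk.eta]
        rw [gval_of_mem ⟨hb, hdeg⟩ hpm] at hg
        obtain ⟨u1, u2, u3⟩ := hb p hp
        omega
      refine ⟨⟨?_, hdeg⟩, hnc, hl⟩
      intro p hp
      obtain ⟨u1, u2, u3⟩ := hb p hp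
      have := hno p hp
      omega
    · intro hM
      rw [mem_SSF] at hM
      obtain ⟨⟨hb, hdeg⟩, hnc, hl⟩ := hM
      constructor
      · rw [mem_SSF]
        refine ⟨⟨?_, hdeg⟩, hnc, hl⟩
        intro p hp
        obtain ⟨u1, u2, u3⟩ := hb p hp
        omega
      · have hemp : M.filter (fun p => p.2 = n + 2) = ∅ := by
          refine Finset.filter_eq_empty_iff.mpr ?_
          intro p hp
          obtain ⟨u1, u2, u3⟩ := hb p hp
          omega
        rw [hemp, Finset.sum_empty]
  have hsplit : range (n + 1) = insert 0 (Icc 1 n) := by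
    ext x; simp only [Finset.mem_range, Finset.mem_insert, Finset.mem_Icc]; omega
  rw [hcard, hsplit, Finset.sum_insert (by simp)]
  congr 1
  · rw [hfib0]
  · refine Finset.sum_congr rfl ?_
    intro k hk
    rw [Finset.mem_Icc] at hk
    have hfibk : (SSF (n + 2)).filter
        (fun M => (∑ p ∈ M.filter (fun p => p.2 = n + 2), p.1) = k)
        = (SSF (n + 2)).filter (fun M => (k, n + 2) ∈ M) := by
      ext M
      simp only [Finset.mem_filter, and_congr_right_iff]
      intro hM
      rw [mem_SSF] at hM
      obtain ⟨⟨hb, hdeg⟩, -, -⟩ := hM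
      constructor
      · intro hg
        by_cases hex : ∃ p ∈ M, p.2 = n + 2
        · obtain ⟨p, hp, hp2⟩ := hex
          have hpm : (p.1, n + 2) ∈ M := by rwa [← hp2, Prod.mk.eta]
          rw [gval_of_mem ⟨hb, hdeg⟩ hpm] at hg
          rwa [← hg]
        · push_neg at hex
          have hemp : M.filter (fun p => p.2 = n + 2) = ∅ :=
            Finset.filter_eq_empty_iff.mpr (fun p hp => hex p hp)
          rw [hemp, Finset.sum_empty] at hg
          omega
      · intro hmem
        exact gval_of_mem ⟨hb, hdeg⟩ hmem
    rw [hfibk, fiber_card n k hk.1 hk.2]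

open PowerSeries

noncomputable def tq (n : ℕ) : ℚ := ((SSF n).card : ℚ)

lemma tq0 : tq 0 = 1 := by rw [tq, t0]; norm_num

lemma tq1 : tq 1 = 1 := by rw [tq, t1]; norm_num

lemma tq_rec (n : ℕ) :
    tq (n + 2) + tq n = tq (n + 1) + ∑ p ∈ antidiagonal n, tq p.1 * tq p.2 := by
  have hre : ∑ k ∈ Icc 1 n, (SSF (k - 1)).card * (SSF (n + 1 - k)).card
      = ∑ i ∈ range n, (SSF i).card * (SSF (n - i)).card := by
    refine Finset.sum_nbij' (i := fun k => k - 1) (j := fun i => i + 1) ?_ ?_ ?_ ?_ ?_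
    · intro a ha; rw [Finset.mem_Icc] at ha; rw [Finset.mem_range]; omega
    · intro a ha; rw [Finset.mem_range] at ha; rw [Finset.mem_Icc]; omega
    · intro a ha; rw [Finset.mem_Icc] at ha; omega
    · intro a ha; omega
    · intro a ha
      rw [Finset.mem_Icc] at ha
      have h1 : n + 1 - a = n - (a - 1) := by omega
      rw [h1]
  have h2 : (SSF (n + 2)).card
      = (SSF (n + 1)).card + ∑ i ∈ range n, (SSF i).card * (SSF (n - i)).card := by
    rw [t_rec, hre]
  have ha : ∑ p ∈ antidiagonal n, tq p.1 * tq p.2 = ∑ i ∈ range (n + 1), tq i * tq (n - i) :=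
    Finset.Nat.sum_antidiagonal_eq_sum_range_succ_mk _ n
  rw [ha, Finset.sum_range_succ, Nat.sub_self, tq0, mul_one]
  simp only [tq]
  rw [h2]
  push_cast
  ring

noncomputable def Fq : PowerSeries ℚ := PowerSeries.mk tq

noncomputable def Aq : PowerSeries ℚ := (X ^ 2 - X + 1 : PowerSeries ℚ)⁻¹

noncomputable def uq : PowerSeries ℚ := X * Aq

noncomputable def Wq : PowerSeries ℚ := (X ^ 2 - X + 1 : PowerSeries ℚ) * Fq

noncomputable def Hq (N : ℕ) : PowerSeries ℚ :=
  ∑ n ∈ range (N + 1), C ((catalan n : ℚ)) * uq ^ (2 * n)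

lemma hAinv : (X ^ 2 - X + 1 : PowerSeries ℚ) * Aq = 1 := by
  rw [Aq]
  refine PowerSeries.mul_inv_cancel _ ?_
  simp

lemma coeffXmul (φ : PowerSeries ℚ) (n : ℕ) :
    (coeff n) (X * φ) = if 1 ≤ n then (coeff (n - 1)) φ else 0 := by
  rw [← pow_one (X : PowerSeries ℚ), PowerSeries.coeff_X_pow_mul']

lemma coeff_u_pow {j m : ℕ} (h : j < m) : (coeff j) (uq ^ m) = 0 := by
  rw [uq, mul_pow, PowerSeries.coeff_X_pow_mul', if_neg (by omega)]

lemma Weq : Wq = 1 + X ^ 2 * Fq ^ 2 := by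
  ext n
  have e1 : Wq = X ^ 2 * Fq - X * Fq + Fq := by rw [Wq]; ring
  rw [e1, map_add, map_sub, map_add, coeffXmul, PowerSeries.coeff_X_pow_mul',
    PowerSeries.coeff_X_pow_mul', PowerSeries.coeff_one]
  rcases n with - | n
  · simp [Fq, tq0]
  · rcases n with - | n
    · simp [Fq, tq0, tq1]
    · have h1 : (2 : ℕ) ≤ n + 1 + 1 := by omega
      have h2 : (1 : ℕ) ≤ n + 1 + 1 := by omega
      rw [if_pos h1, if_pos h1, if_pos h2, if_neg (by omega)]
      have h3 : n + 1 + 1 - 2 = n := by omega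
      have h4 : n + 1 + 1 - 1 = n + 1 := by omega
      rw [h3, h4, pow_two, PowerSeries.coeff_mul]
      simp only [Fq, PowerSeries.coeff_mk]
      have := tq_rec n
      linarith

lemma FAq : Fq = Aq * Wq := by
  rw [Wq, ← mul_assoc, mul_comm Aq, hAinv, one_mul]

lemma Wfe : Wq = 1 + uq ^ 2 * Wq ^ 2 := by
  have h : X ^ 2 * Fq ^ 2 = uq ^ 2 * Wq ^ 2 := by
    calc X ^ 2 * Fq ^ 2 = X ^ 2 * (Aq * Wq) ^ 2 := by rw [← FAq]
    _ = (X * Aq) ^ 2 * Wq ^ 2 := by ring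
    _ = uq ^ 2 * Wq ^ 2 := by rw [uq]
  conv_lhs => rw [Weq]
  rw [h]

lemma L5 (N : ℕ) : ∀ j ≤ 2 * N + 1,
    (coeff j) (1 + uq ^ 2 * (Hq N) ^ 2) = (coeff j) (Hq N) := by
  intro j hj
  have hexp : uq ^ 2 * (Hq N) ^ 2
      = ∑ p ∈ (range (N + 1)) ×ˢ (range (N + 1)),
          C ((catalan p.1 : ℚ) * (catalan p.2 : ℚ)) * uq ^ (2 * (p.1 + p.2 + 1)) := by
    rw [pow_two (Hq N), Hq, Finset.sum_mul_sum, Finset.sum_product, Finset.mul_sum]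
    refine Finset.sum_congr rfl ?_
    intro a _
    rw [Finset.mul_sum]
    refine Finset.sum_congr rfl ?_
    intro b _
    rw [map_mul, show 2 * (a + b + 1) = 2 * a + (2 * b + 2) by ring, pow_add, pow_add]
    ring
  rw [map_add, hexp, map_sum]
  simp only [PowerSeries.coeff_C_mul]
  rw [← Finset.sum_filter_add_sum_filter_not ((range (N + 1)) ×ˢ (range (N + 1)))
    (fun p => p.1 + p.2 < N)]
  have hz : ∑ p ∈ ((range (N + 1)) ×ˢ (range (N + 1))).filter (fun p => ¬ p.1 + p.2 < N),
      (catalan p.1 : ℚ) * (catalan p.2 : ℚ) * (coeff j) (uq ^ (2 * (p.1 + p.2 + 1))) = 0 := by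
    refine Finset.sum_eq_zero ?_
    intro p hp
    rw [Finset.mem_filter] at hp
    rw [coeff_u_pow (by omega), mul_zero]
  rw [hz, add_zero]
  have hmap : ∀ p ∈ ((range (N + 1)) ×ˢ (range (N + 1))).filter (fun p => p.1 + p.2 < N),
      p.1 + p.2 ∈ range N := by
    intro p hp
    rw [Finset.mem_filter] at hp
    rw [Finset.mem_range]
    exact hp.2
  rw [← Finset.sum_fiberwise_of_maps_to hmap]
  have hstep : ∀ m ∈ range N,
      (∑ p ∈ (((range (N + 1)) ×ˢ (range (N + 1))).filter
          (fun p => p.1 + p.2 < N)).filter (fun p => p.1 + p.2 = m),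
        (catalan p.1 : ℚ) * (catalan p.2 : ℚ) * (coeff j) (uq ^ (2 * (p.1 + p.2 + 1))))
      = (catalan (m + 1) : ℚ) * (coeff j) (uq ^ (2 * (m + 1))) := by
    intro m hm
    rw [Finset.mem_range] at hm
    have hfib : (((range (N + 1)) ×ˢ (range (N + 1))).filter
        (fun p => p.1 + p.2 < N)).filter (fun p => p.1 + p.2 = m) = antidiagonal m := by
      ext p
      simp only [Finset.mem_filter, Finset.mem_product, Finset.mem_range, Finset.HasAntidiagonal.mem_antidiagonal]
      omega
    rw [hfib]
    have hcong : ∀ p ∈ antidiagonal m,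
        (catalan p.1 : ℚ) * (catalan p.2 : ℚ) * (coeff j) (uq ^ (2 * (p.1 + p.2 + 1)))
        = (catalan p.1 : ℚ) * (catalan p.2 : ℚ) * (coeff j) (uq ^ (2 * (m + 1))) := by
      intro p hp
      rw [Finset.HasAntidiagonal.mem_antidiagonal] at hp
      rw [hp]
    rw [Finset.sum_congr rfl hcong, ← Finset.sum_mul]
    congr 1
    rw [catalan_succ']
    push_cast
    rfl
  rw [Finset.sum_congr rfl hstep]
  rw [Hq, map_sum]
  simp only [PowerSeries.coeff_C_mul]
  rw [Finset.sum_range_succ']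
  simp only [catalan_zero, Nat.cast_one, one_mul, mul_zero, pow_zero]
  ring

lemma L6 (N : ℕ) : ∀ j, j ≤ 2 * N + 1 → (coeff j) Wq = (coeff j) (Hq N) := by
  intro j
  induction j using Nat.strong_induction_on with
  | _ j IH =>
    intro hj
    have h1 : (coeff j) Wq = (coeff j) (1 : PowerSeries ℚ) + (coeff j) (uq ^ 2 * Wq ^ 2) := by
      conv_lhs => rw [Wfe]
      rw [map_add]
    have h2 := L5 N j hj
    rw [map_add] at h2
    have key : uq ^ 2 * Wq ^ 2 - uq ^ 2 * (Hq N) ^ 2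
        = X ^ 2 * (Aq ^ 2 * (Wq + Hq N) * (Wq - Hq N)) := by
      rw [uq]; ring
    have h3 : (coeff j) (uq ^ 2 * Wq ^ 2) - (coeff j) (uq ^ 2 * (Hq N) ^ 2) = 0 := by
      rw [← map_sub, key, PowerSeries.coeff_X_pow_mul']
      split_ifs with h
      · rw [PowerSeries.coeff_mul]
        refine Finset.sum_eq_zero ?_
        intro p hp
        rw [Finset.HasAntidiagonal.mem_antidiagonal] at hp
        rw [map_sub, IH p.2 (by omega) (by omega), sub_self, mul_zero]
      · rfl
    linarith [h1, h2, h3]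

end RNAAux

/-- As formal power series:
`∑_n ∑_{h ≤ n/2} T_{2,1}(n,h) z^n = (z²-z+1)⁻¹ ∑_n Cat(n) (z/(z²-z+1))^{2n}`,
stated coefficient-wise (for the coefficient of `z^N` only the finitely many
terms `n ≤ N` of the right-hand sum contribute, since `(z(z²-z+1)⁻¹)^{2n}` has
order `2n`). -/
theorem stmt15 : ∀ N : ℕ,
    (PowerSeries.coeff (R := ℚ) N)
        (PowerSeries.mk fun n : ℕ => ∑ h ∈ Finset.range (n / 2 + 1), (T21 n h : ℚ))
      = (PowerSeries.coeff (R := ℚ) N)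
        ((PowerSeries.X ^ 2 - PowerSeries.X + 1)⁻¹ *
          ∑ n ∈ Finset.range (N + 1),
            PowerSeries.C (R := ℚ) ((catalan n : ℚ)) *
              (PowerSeries.X * (PowerSeries.X ^ 2 - PowerSeries.X + 1)⁻¹) ^ (2 * n)) := by
  intro N
  rw [PowerSeries.coeff_mk]
  have hL : ∑ h ∈ Finset.range (N / 2 + 1), (T21 N h : ℚ) = RNAAux.tq N := by
    rw [RNAAux.tq, ← RNAAux.sum_T21 N, Nat.cast_sum]
  rw [hL]
  have hR : ((PowerSeries.X ^ 2 - PowerSeries.X + 1 : PowerSeries ℚ)⁻¹ *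
      ∑ n ∈ Finset.range (N + 1),
        PowerSeries.C (R := ℚ) ((catalan n : ℚ)) *
          (PowerSeries.X * (PowerSeries.X ^ 2 - PowerSeries.X + 1)⁻¹) ^ (2 * n))
      = RNAAux.Aq * RNAAux.Hq N := by
    rw [RNAAux.Aq, RNAAux.Hq, RNAAux.uq, RNAAux.Aq]
  rw [hR]
  have hWH : (PowerSeries.coeff (R := ℚ) N) (RNAAux.Aq * RNAAux.Hq N)
      = (PowerSeries.coeff (R := ℚ) N) (RNAAux.Aq * RNAAux.Wq) := by
    rw [PowerSeries.coeff_mul, PowerSeries.coeff_mul]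
    refine Finset.sum_congr rfl ?_
    intro p hp
    rw [Finset.HasAntidiagonal.mem_antidiagonal] at hp
    rw [RNAAux.L6 N p.2 (by omega)]
  rw [hWH, ← RNAAux.FAq, RNAAux.Fq, PowerSeries.coeff_mk]
end
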